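/- arXiv:1407.5818 — 7 statements merged into one kernel-verified Lean document; each statement's English description precedes it below -/
import Mathlib

section
/- Let G be a d-regular graph on n vertices with d ≤ n/2, and let λ be the second largest absolute value of an eigenvalue of the adjacency matrix A(G). Then the vertex connectivity satisfies κ(G) ≥ d − 36λ²/d. -/
set_option maxHeartbeats 1000000


open Finset

noncomputable section

/-- The Laplacian eigenvalues of a graph on `Fin n`, sorted in ascending order. -/
def lapEig {n : ℕ} (G : SimpleGraph (Fin n)) [DecidableRel G.Adj] : Fin n → ℝ :=
  let h : (G.lapMatrix ℝ).IsHermitian := (SimpleGraph.posSemidef_lapMatrix ℝ G).1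
  h.eigenvalues ∘ Tuple.sort h.eigenvalues

/-- The average degree of a graph on `Fin n`. -/
def avgDeg {n : ℕ} (G : SimpleGraph (Fin n)) [DecidableRel G.Adj] : ℝ :=
  (∑ v, (G.degree v : ℝ)) / n

/- The vertex connectivity: the least size of a set of vertices whose deletion leaves a
graph that is not preconnected, and `n - 1` if no such set exists (complete graphs). -/
open scoped Classical in
def vertexConnectivity {n : ℕ} (G : SimpleGraph (Fin n)) : ℕ :=
  if ∃ S : Finset (Fin n), ¬ (G.induce ((↑S : Set (Fin n))ᶜ)).Preconnected then
    sInf {k | ∃ S : Finset (Fin n), S.card = k ∧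
      ¬ (G.induce ((↑S : Set (Fin n))ᶜ)).Preconnected}
  else n - 1

/-- The adjacency eigenvalues of a graph on `Fin n`, sorted in ascending order. -/
def adjEig {n : ℕ} (G : SimpleGraph (Fin n)) [DecidableRel G.Adj] : Fin n → ℝ :=
  let h : (G.adjMatrix ℝ).IsHermitian := by
    rw [Matrix.IsHermitian, Matrix.conjTranspose_eq_transpose_of_trivial]
    exact G.isSymm_adjMatrix
  h.eigenvalues ∘ Tuple.sort h.eigenvalues

namespace VCAux

open Matrix SimpleGraph

variable {n d : ℕ} (G : SimpleGraph (Fin n)) [DecidableRel G.Adj]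

lemma adj_isHermitian : (G.adjMatrix ℝ).IsHermitian := by
  rw [Matrix.IsHermitian, Matrix.conjTranspose_eq_transpose_of_trivial]
  exact G.isSymm_adjMatrix

lemma adjEig_eq (i : Fin n) :
    adjEig G i = (adj_isHermitian G).eigenvalues
      (Tuple.sort (adj_isHermitian G).eigenvalues i) := rfl

lemma rowsum (hreg : G.IsRegularOfDegree d) (x : Fin n) :
    ∑ y, G.adjMatrix ℝ x y = (d : ℝ) := by
  have := adjMatrix_mulVec_const_apply_of_regular (α := ℝ) (a := (1:ℝ)) hreg (v := x)
  simpa [mulVec, dotProduct] using this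

lemma quad_bound (hreg : G.IsRegularOfDegree d) (x : Fin n → ℝ) :
    |x ⬝ᵥ (G.adjMatrix ℝ *ᵥ x)| ≤ (d : ℝ) * (x ⬝ᵥ x) := by
  have expand : x ⬝ᵥ (G.adjMatrix ℝ *ᵥ x)
      = ∑ u, ∑ v, G.adjMatrix ℝ u v * (x u * x v) := by
    refine Finset.sum_congr rfl fun u _ => ?_
    rw [mulVec, dotProduct, Finset.mul_sum]
    exact Finset.sum_congr rfl fun v _ => by ring
  rw [expand]
  have h1 : |∑ u, ∑ v, G.adjMatrix ℝ u v * (x u * x v)|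
      ≤ ∑ u, ∑ v, G.adjMatrix ℝ u v * ((x u ^ 2 + x v ^ 2) / 2) := by
    refine (Finset.abs_sum_le_sum_abs _ _).trans (Finset.sum_le_sum fun u _ => ?_)
    refine (Finset.abs_sum_le_sum_abs _ _).trans (Finset.sum_le_sum fun v _ => ?_)
    have hnn : (0:ℝ) ≤ G.adjMatrix ℝ u v := by
      simp [adjMatrix_apply]; split_ifs <;> norm_num
    rw [abs_mul, abs_of_nonneg hnn]
    have : |x u * x v| ≤ (x u ^ 2 + x v ^ 2) / 2 := by
      rcases abs_le.mp (le_refl |x u * x v|) with _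
      nlinarith [sq_nonneg (x u - x v), sq_nonneg (x u + x v), abs_nonneg (x u * x v),
        abs_mul_abs_self (x u), abs_mul (x u) (x v), sq_abs (x u), sq_abs (x v),
        abs_nonneg (x u), abs_nonneg (x v), sq_nonneg (|x u| - |x v|)]
    exact mul_le_mul_of_nonneg_left this hnn
  refine h1.trans (le_of_eq ?_)
  have hcol : ∀ v, ∑ u, G.adjMatrix ℝ u v = (d : ℝ) := by
    intro v
    have : ∀ u, G.adjMatrix ℝ u v = G.adjMatrix ℝ v u := by
      intro u
      conv_lhs => rw [← transpose_adjMatrix (α := ℝ) (G := G)]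
      rfl
    simp_rw [this]
    exact rowsum G hreg v
  have step1 : ∑ u, ∑ v, G.adjMatrix ℝ u v * ((x u ^ 2 + x v ^ 2) / 2)
      = (∑ u, ∑ v, G.adjMatrix ℝ u v * x u ^ 2) / 2
        + (∑ u, ∑ v, G.adjMatrix ℝ u v * x v ^ 2) / 2 := by
    rw [Finset.sum_div, Finset.sum_div, ← Finset.sum_add_distrib]
    refine Finset.sum_congr rfl fun u _ => ?_
    rw [Finset.sum_div, Finset.sum_div, ← Finset.sum_add_distrib]
    exact Finset.sum_congr rfl fun v _ => by ring
  have step2 : ∑ u, ∑ v, G.adjMatrix ℝ u v * x u ^ 2 = (d:ℝ) * (x ⬝ᵥ x) := by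
    have : ∀ u, ∑ v, G.adjMatrix ℝ u v * x u ^ 2 = (d:ℝ) * x u ^ 2 := by
      intro u; rw [← Finset.sum_mul, rowsum G hreg]
    simp_rw [this]
    rw [dotProduct, Finset.mul_sum]
    exact Finset.sum_congr rfl fun u _ => by ring
  have step3 : ∑ u, ∑ v, G.adjMatrix ℝ u v * x v ^ 2 = (d:ℝ) * (x ⬝ᵥ x) := by
    rw [Finset.sum_comm]
    have : ∀ v, ∑ u, G.adjMatrix ℝ u v * x v ^ 2 = (d:ℝ) * x v ^ 2 := by
      intro v; rw [← Finset.sum_mul, hcol]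
    simp_rw [this]
    rw [dotProduct, Finset.mul_sum]
    exact Finset.sum_congr rfl fun u _ => by ring
  rw [step1, step2, step3]
  ring

lemma star_entry (M : Matrix (Fin n) (Fin n) ℝ) (i j : Fin n) :
    (star M) i j = M j i := by
  rw [Matrix.star_eq_conjTranspose, Matrix.conjTranspose_apply, star_trivial]

local notation "A" => G.adjMatrix ℝ
local notation "hA" => adj_isHermitian G
local notation "U" => ((Matrix.IsHermitian.eigenvectorUnitary (adj_isHermitian G) : Matrix.unitaryGroup (Fin n) ℝ) : Matrix (Fin n) (Fin n) ℝ)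
local notation "W" => star ((Matrix.IsHermitian.eigenvectorUnitary (adj_isHermitian G) : Matrix.unitaryGroup (Fin n) ℝ) : Matrix (Fin n) (Fin n) ℝ)

lemma hU1 : W * U = 1 := Unitary.coe_star_mul_self _

lemma hU2 : U * W = 1 := Unitary.coe_mul_star_self _

lemma hspec : A = U * Matrix.diagonal (Matrix.IsHermitian.eigenvalues hA) * W := by
  have := Matrix.IsHermitian.spectral_theorem hA
  rwa [RCLike.ofReal_real_eq_id, Function.id_comp] at this

lemma vecMul_eq (x : Fin n → ℝ) : x ᵥ* U = W *ᵥ x := by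
  funext j
  rw [Matrix.vecMul, Matrix.mulVec, dotProduct, dotProduct]
  refine Finset.sum_congr rfl fun i _ => ?_
  rw [star_entry, mul_comm]

lemma parseval (x y : Fin n → ℝ) : (W *ᵥ x) ⬝ᵥ (W *ᵥ y) = x ⬝ᵥ y := by
  rw [Matrix.dotProduct_mulVec]
  have h1 : (W *ᵥ x) ᵥ* W = x := by
    funext i
    rw [Matrix.vecMul, dotProduct]
    have : ∀ j, (W *ᵥ x) j * W j i = U i j * (W *ᵥ x) j := by
      intro j; rw [star_entry, mul_comm]
    simp_rw [this]
    have : ∑ j, U i j * (W *ᵥ x) j = (U *ᵥ (W *ᵥ x)) i := by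
      rw [Matrix.mulVec, dotProduct]
    rw [this, Matrix.mulVec_mulVec, hU2, Matrix.one_mulVec]
  rw [h1]

lemma rep (x y : Fin n → ℝ) :
    x ⬝ᵥ (A *ᵥ y) = ∑ j, Matrix.IsHermitian.eigenvalues hA j * ((W *ᵥ x) j * (W *ᵥ y) j) := by
  have key : A *ᵥ y = U *ᵥ (Matrix.diagonal (Matrix.IsHermitian.eigenvalues hA) *ᵥ (W *ᵥ y)) := by
    rw [Matrix.mulVec_mulVec, Matrix.mulVec_mulVec]
    exact congrFun (congrArg _ (hspec G)) y
  rw [key, Matrix.dotProduct_mulVec, vecMul_eq, dotProduct]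
  refine Finset.sum_congr rfl fun j _ => ?_
  rw [Matrix.mulVec_diagonal]
  ring

lemma mulVec_col (j : Fin n) :
    A *ᵥ (fun x => U x j) = Matrix.IsHermitian.eigenvalues hA j • (fun x => U x j) := by
  have hAU : A * U = U * Matrix.diagonal (Matrix.IsHermitian.eigenvalues hA) := by
    have h := congrArg (· * U) (hspec G)
    rw [h, Matrix.mul_assoc, Matrix.mul_assoc, hU1, Matrix.mul_one]
  funext x
  have h1 : (A *ᵥ (fun y => U y j)) x = (A * U) x j := by
    rw [Matrix.mulVec, dotProduct, Matrix.mul_apply]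
  rw [h1, hAU, Matrix.mul_diagonal]
  simp [mul_comm]

lemma col_unit (j : Fin n) : (fun x => U x j) ⬝ᵥ (fun x => U x j) = 1 := by
  have h1 : (W * U) j j = (1 : Matrix (Fin n) (Fin n) ℝ) j j := by rw [hU1]
  rw [Matrix.mul_apply] at h1
  simp only [Matrix.one_apply_eq] at h1
  rw [dotProduct, ← h1]
  refine Finset.sum_congr rfl fun x _ => ?_
  rw [star_entry]

lemma eig_abs_le (hreg : G.IsRegularOfDegree d) (j : Fin n) :
    |Matrix.IsHermitian.eigenvalues hA j| ≤ (d : ℝ) := by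
  have hq := quad_bound G hreg (fun x => U x j)
  rw [mulVec_col, dotProduct_smul, col_unit, smul_eq_mul, mul_one] at hq
  simpa using hq

lemma ev_bound (hn : 0 < n) (hreg : G.IsRegularOfDegree d) (lam : ℝ)
    (hub : ∀ i : Fin n, (i : ℕ) < n - 1 → |adjEig G i| ≤ lam)
    (f g : Fin n → ℝ) (hf : f ⬝ᵥ (fun _ => (1:ℝ)) = 0) (hg : g ⬝ᵥ (fun _ => (1:ℝ)) = 0) :
    (f ⬝ᵥ (G.adjMatrix ℝ *ᵥ g))^2 ≤ lam^2 * ((f ⬝ᵥ f) * (g ⬝ᵥ g)) := by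
  classical
  set eig := Matrix.IsHermitian.eigenvalues hA with heig
  set p := W *ᵥ f with hp
  set q := W *ᵥ g with hq
  have key : ∀ j, (eig j)^2 * (p j)^2 ≤ lam^2 * (p j)^2 := by
    rcases le_or_gt (d : ℝ) lam with hld | hld
    · intro j
      have h1 : |eig j| ≤ d := eig_abs_le G hreg j
      have h2 : (eig j)^2 ≤ lam^2 := by
        have : (eig j)^2 ≤ (d:ℝ)^2 := by
          rw [← sq_abs (eig j)]
          exact pow_le_pow_left₀ (abs_nonneg _) h1 2
        refine this.trans (pow_le_pow_left₀ (Nat.cast_nonneg d) hld 2)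
      exact mul_le_mul_of_nonneg_right h2 (sq_nonneg _)
    · -- lam < d : the top eigenvalue d is simple, with eigenvector 𝟙
      have hsort : ∀ i : Fin n, (i:ℕ) < n - 1 →
          |eig (Tuple.sort eig i)| ≤ lam := by
        intro i hi
        have := hub i hi
        rwa [adjEig_eq] at this
      have uniq : ∀ j1 j2 : Fin n, eig j1 = (d:ℝ) → eig j2 = (d:ℝ) → j1 = j2 := by
        intro j1 j2 h1 h2
        by_contra hne
        set σ := Tuple.sort eig with hσ
        have hi12 : σ.symm j1 ≠ σ.symm j2 := fun h => hne (by
          have := congrArg σ h; simpa using this)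
        have hex : ∃ i : Fin n, (i:ℕ) < n - 1 ∧ eig (σ i) = (d:ℝ) := by
          rcases lt_or_gt_of_ne hi12 with h | h
          · refine ⟨σ.symm j1, ?_, by simp [h1]⟩
            have h2' : ((σ.symm j2 : Fin n) : ℕ) < n := (σ.symm j2).isLt
            have := Fin.lt_iff_val_lt_val.mp h
            omega
          · refine ⟨σ.symm j2, ?_, by simp [h2]⟩
            have h2' : ((σ.symm j1 : Fin n) : ℕ) < n := (σ.symm j1).isLt
            have := Fin.lt_iff_val_lt_val.mp h
            omega
        obtain ⟨i, hi, hieig⟩ := hex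
        have := hsort i hi
        rw [hieig] at this
        have : (d:ℝ) ≤ lam := le_trans (le_abs_self _) this
        linarith
      have hone : A *ᵥ (fun _ => (1:ℝ)) = (d:ℝ) • (fun _ => (1:ℝ)) := by
        funext v
        have := adjMatrix_mulVec_const_apply_of_regular (α := ℝ) (a := (1:ℝ)) hreg (v := v)
        simpa [Function.const] using this
      set c := W *ᵥ (fun _ => (1:ℝ)) with hc
      have eigc : ∀ j, eig j * c j = (d:ℝ) * c j := by
        intro j
        have h1 : W *ᵥ (A *ᵥ (fun _ => (1:ℝ))) = (d:ℝ) • c := by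
          rw [hone, Matrix.mulVec_smul, hc]
        have h2 : W *ᵥ (A *ᵥ (fun _ => (1:ℝ)))
            = Matrix.diagonal eig *ᵥ c := by
          rw [Matrix.mulVec_mulVec]
          have : W * A = Matrix.diagonal eig * W := by
            have h3 := congrArg (W * ·) (hspec G)
            rw [h3, ← Matrix.mul_assoc, ← Matrix.mul_assoc, hU1, Matrix.one_mul]
          rw [this, ← Matrix.mulVec_mulVec]
        have := h2.symm.trans h1
        have hj := congrFun this j
        rw [Matrix.mulVec_diagonal] at hj
        simpa using hj
      have hcne : ∃ j0, c j0 ≠ 0 := by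
        by_contra hcon
        push_neg at hcon
        have hzero : c = 0 := funext fun j => hcon j
        have : c ⬝ᵥ c = (n : ℝ) := by
          rw [hc, parseval]
          simp [dotProduct]
        rw [hzero] at this
        have hn' : (0:ℝ) < n := by exact_mod_cast hn
        rw [zero_dotProduct] at this
        linarith
      obtain ⟨j0, hj0⟩ := hcne
      have heigj0 : eig j0 = (d:ℝ) := by
        have := eigc j0
        exact mul_right_cancel₀ hj0 this
      have hczero : ∀ j, j ≠ j0 → c j = 0 := by
        intro j hj
        by_contra hcj
        have := eigc j
        have heigj : eig j = (d:ℝ) := by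
          exact mul_right_cancel₀ hcj this
        exact hj (uniq j j0 heigj heigj0)
      have hpj0 : p j0 = 0 := by
        have h1 : p ⬝ᵥ c = 0 := by rw [hp, hc, parseval]; exact hf
        have h2 : p ⬝ᵥ c = p j0 * c j0 := by
          rw [dotProduct]
          rw [Finset.sum_eq_single j0]
          · intro b _ hb; rw [hczero b hb, mul_zero]
          · intro h; exact absurd (Finset.mem_univ j0) h
        rw [h2] at h1
        exact (mul_eq_zero.mp h1).resolve_right hj0
      intro j
      by_cases hj : j = j0
      · rw [hj, hpj0]
        simp
      · have hjl : |eig j| ≤ lam := by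
          set σ := Tuple.sort eig with hσ
          set i := σ.symm j with hi
          rcases lt_or_ge ((i : Fin n) : ℕ) (n - 1) with hlt | hge
          · have := hsort i hlt
            simpa [hi] using this
          · exfalso
            have hival : ((i : Fin n) : ℕ) = n - 1 := by
              have := (i : Fin n).isLt; omega
            set i0 := σ.symm j0 with hi0
            have hmono := Tuple.monotone_sort eig
            have hle : i0 ≤ i := by
              rw [Fin.le_def, hival]
              have := (i0 : Fin n).isLt; omega
            have h1 : eig (σ i0) ≤ eig (σ i) := hmono hle
            have h2 : eig (σ i0) = (d:ℝ) := by simpa [hi0] using heigj0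
            have h3 : eig (σ i) ≤ (d:ℝ) :=
              le_trans (le_abs_self _) (eig_abs_le G hreg _)
            have h4 : eig (σ i) = (d:ℝ) := le_antisymm h3 (h2 ▸ h1)
            have : σ i = j0 := uniq _ _ h4 heigj0
            rw [hi] at this
            simp at this
            exact hj this
        have h2 : (eig j)^2 ≤ lam^2 := by
          rw [← sq_abs (eig j)]
          exact pow_le_pow_left₀ (abs_nonneg _) hjl 2
        exact mul_le_mul_of_nonneg_right h2 (sq_nonneg _)
  have hrep := rep G f g
  rw [hrep]
  have hcs : (∑ j, eig j * (p j * q j))^2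
      ≤ (∑ j, (eig j * p j)^2) * (∑ j, (q j)^2) := by
    have := Finset.sum_mul_sq_le_sq_mul_sq Finset.univ (fun j => eig j * p j) (fun j => q j)
    calc (∑ j, eig j * (p j * q j))^2
        = (∑ j, (eig j * p j) * q j)^2 := by
          congr 1; exact Finset.sum_congr rfl fun j _ => by ring
      _ ≤ _ := this
  have hsum1 : (∑ j, (eig j * p j)^2) ≤ lam^2 * (f ⬝ᵥ f) := by
    have h1 : (∑ j, (eig j * p j)^2) ≤ ∑ j, lam^2 * (p j)^2 := by
      refine Finset.sum_le_sum fun j _ => ?_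
      rw [mul_pow]
      exact key j
    have h2 : ∑ j, lam^2 * (p j)^2 = lam^2 * (f ⬝ᵥ f) := by
      rw [← Finset.mul_sum]
      congr 1
      have := parseval G f f
      rw [← this, dotProduct]
      exact Finset.sum_congr rfl fun j _ => (sq (p j)) ▸ by rw [pow_two]
    linarith
  have hsum2 : (∑ j, (q j)^2) = g ⬝ᵥ g := by
    have := parseval G g g
    rw [← this, dotProduct]
    exact Finset.sum_congr rfl fun j _ => by rw [pow_two]
  have hq2 : (0:ℝ) ≤ ∑ j, (q j)^2 := Finset.sum_nonneg fun j _ => sq_nonneg _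
  calc (∑ j, eig j * (p j * q j))^2
      ≤ (∑ j, (eig j * p j)^2) * (∑ j, (q j)^2) := hcs
    _ ≤ (lam^2 * (f ⬝ᵥ f)) * (∑ j, (q j)^2) := mul_le_mul_of_nonneg_right hsum1 hq2
    _ = lam^2 * ((f ⬝ᵥ f) * (g ⬝ᵥ g)) := by rw [hsum2]; ring

/-- Edge counting sum between two finsets (ordered pairs). -/
def eCnt (X Y : Finset (Fin n)) : ℝ := ∑ x ∈ X, ∑ y ∈ Y, G.adjMatrix ℝ x y

lemma colsum (hreg : G.IsRegularOfDegree d) (v : Fin n) :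
    ∑ u, G.adjMatrix ℝ u v = (d : ℝ) := by
  have : ∀ u, G.adjMatrix ℝ u v = G.adjMatrix ℝ v u := by
    intro u
    conv_lhs => rw [← transpose_adjMatrix (α := ℝ) (G := G)]
    rfl
  simp_rw [this]
  exact rowsum G hreg v

lemma dot_expand (x y : Fin n → ℝ) :
    x ⬝ᵥ (G.adjMatrix ℝ *ᵥ y) = ∑ u, ∑ v, G.adjMatrix ℝ u v * (x u * y v) := by
  refine Finset.sum_congr rfl fun u _ => ?_
  rw [Matrix.mulVec, dotProduct, Finset.mul_sum]
  exact Finset.sum_congr rfl fun v _ => by ring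

lemma eml (hn : 0 < n) (hreg : G.IsRegularOfDegree d) (lam : ℝ)
    (hub : ∀ i : Fin n, (i : ℕ) < n - 1 → |adjEig G i| ≤ lam)
    (S T : Finset (Fin n)) :
    (eCnt G S T * n - d * S.card * T.card)^2
      ≤ lam^2 * S.card * T.card * (n:ℝ)^2 := by
  classical
  set s : ℝ := (S.card : ℝ) with hs
  set t : ℝ := (T.card : ℝ) with ht
  set χS : Fin n → ℝ := fun v => if v ∈ S then 1 else 0 with hχS
  set χT : Fin n → ℝ := fun v => if v ∈ T then 1 else 0 with hχT
  set one : Fin n → ℝ := fun _ => 1 with hone1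
  set f : Fin n → ℝ := (n:ℝ) • χS - s • one with hf
  set g : Fin n → ℝ := (n:ℝ) • χT - t • one with hg
  have ind_sum : ∀ (R : Finset (Fin n)) (h : Fin n → ℝ),
      ∑ u, (if u ∈ R then (1:ℝ) else 0) * h u = ∑ u ∈ R, h u := by
    intro R h
    simp only [ite_mul, one_mul, zero_mul]
    rw [Finset.sum_ite_mem, Finset.univ_inter]
  have ind_sum' : ∀ (R : Finset (Fin n)) (h : Fin n → ℝ),
      ∑ u, h u * (if u ∈ R then (1:ℝ) else 0) = ∑ u ∈ R, h u := by
    intro R h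
    simp only [mul_ite, mul_one, mul_zero]
    rw [Finset.sum_ite_mem, Finset.univ_inter]
  have hχSsum : ∑ v, χS v = s := by
    have := ind_sum S (fun _ => (1:ℝ))
    rw [hχS, hs]; simpa using this
  have hχTsum : ∑ v, χT v = t := by
    have := ind_sum T (fun _ => (1:ℝ))
    rw [hχT, ht]; simpa using this
  -- base dot products
  have dSone : χS ⬝ᵥ one = s := by
    rw [dotProduct, hone1]
    simpa using hχSsum
  have doneS : one ⬝ᵥ χS = s := by
    rw [dotProduct, hone1]
    simpa using hχSsum
  have dTone : χT ⬝ᵥ one = t := by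
    rw [dotProduct, hone1]
    simpa using hχTsum
  have doneT : one ⬝ᵥ χT = t := by
    rw [dotProduct, hone1]
    simpa using hχTsum
  have doneone : one ⬝ᵥ one = (n:ℝ) := by
    rw [dotProduct, hone1]
    simp [Finset.card_univ]
  have dSS : χS ⬝ᵥ χS = s := by
    rw [dotProduct]
    have : ∀ v, χS v * χS v = χS v := by
      intro v; rw [hχS]; simp only; split_ifs <;> ring
    simp_rw [this]; exact hχSsum
  have dTT : χT ⬝ᵥ χT = t := by
    rw [dotProduct]
    have : ∀ v, χT v * χT v = χT v := by
      intro v; rw [hχT]; simp only; split_ifs <;> ring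
    simp_rw [this]; exact hχTsum
  -- adjacency action
  have honev : G.adjMatrix ℝ *ᵥ one = (d:ℝ) • one := by
    funext v
    have := adjMatrix_mulVec_const_apply_of_regular (α := ℝ) (a := (1:ℝ)) hreg (v := v)
    rw [hone1]
    simpa [Function.const] using this
  have honevec : one ᵥ* G.adjMatrix ℝ = (d:ℝ) • one := by
    funext v
    rw [Matrix.vecMul, dotProduct, hone1]
    simp only [one_mul]
    have := colsum G hreg v
    simpa using this
  have dAone : χS ⬝ᵥ (G.adjMatrix ℝ *ᵥ one) = d * s := by
    rw [honev, dotProduct_smul, dSone, smul_eq_mul]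
  have doneA : one ⬝ᵥ (G.adjMatrix ℝ *ᵥ χT) = d * t := by
    rw [Matrix.dotProduct_mulVec, honevec, smul_dotProduct, doneT, smul_eq_mul]
  have doneAone : one ⬝ᵥ (G.adjMatrix ℝ *ᵥ one) = d * n := by
    rw [honev, dotProduct_smul, doneone, smul_eq_mul]
  have dSAT : χS ⬝ᵥ (G.adjMatrix ℝ *ᵥ χT) = eCnt G S T := by
    rw [dotProduct, eCnt]
    have inner : ∀ u, (G.adjMatrix ℝ *ᵥ χT) u = ∑ y ∈ T, G.adjMatrix ℝ u y := by
      intro u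
      rw [Matrix.mulVec, dotProduct]
      have := ind_sum' T (fun y => G.adjMatrix ℝ u y)
      rw [hχT]
      simpa using this
    simp_rw [inner]
    have := ind_sum S (fun u => ∑ y ∈ T, G.adjMatrix ℝ u y)
    rw [hχS]
    simpa using this
  -- expansions
  have hfdot : f ⬝ᵥ one = 0 := by
    rw [hf, sub_dotProduct, smul_dotProduct, smul_dotProduct,
      dSone, doneone, smul_eq_mul, smul_eq_mul]
    ring
  have hgdot : g ⬝ᵥ one = 0 := by
    rw [hg, sub_dotProduct, smul_dotProduct, smul_dotProduct,
      dTone, doneone, smul_eq_mul, smul_eq_mul]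
    ring
  have hffdot : f ⬝ᵥ f = s * n * (n - s) := by
    rw [hf, sub_dotProduct, smul_dotProduct, smul_dotProduct,
      dotProduct_sub, dotProduct_sub, dotProduct_smul,
      dotProduct_smul, dotProduct_smul, dotProduct_smul,
      dSS, dSone, doneS, doneone]
    simp only [smul_eq_mul]
    ring
  have hggdot : g ⬝ᵥ g = t * n * (n - t) := by
    rw [hg, sub_dotProduct, smul_dotProduct, smul_dotProduct,
      dotProduct_sub, dotProduct_sub, dotProduct_smul,
      dotProduct_smul, dotProduct_smul, dotProduct_smul,
      dTT, dTone, doneT, doneone]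
    simp only [smul_eq_mul]
    ring
  have hexp : f ⬝ᵥ (G.adjMatrix ℝ *ᵥ g)
      = (n:ℝ)^2 * eCnt G S T - n * (d * s * t) := by
    rw [hg, Matrix.mulVec_sub, Matrix.mulVec_smul, Matrix.mulVec_smul, hf,
      sub_dotProduct, smul_dotProduct, smul_dotProduct,
      dotProduct_sub, dotProduct_sub, dotProduct_smul,
      dotProduct_smul, dotProduct_smul, dotProduct_smul,
      dSAT, dAone, doneA, doneAone]
    simp only [smul_eq_mul]
    ring
  have hev := ev_bound G hn hreg lam hub f g hfdot hgdot
  rw [hexp, hffdot, hggdot] at hev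
  have hsn : s ≤ n := by
    rw [hs]
    exact_mod_cast (show S.card ≤ n by simpa using Finset.card_le_univ S)
  have htn : t ≤ n := by
    rw [ht]
    exact_mod_cast (show T.card ≤ n by simpa using Finset.card_le_univ T)
  have hs0 : 0 ≤ s := by rw [hs]; positivity
  have ht0 : 0 ≤ t := by rw [ht]; positivity
  have hn0 : (0:ℝ) < n := by exact_mod_cast hn
  have key : (n:ℝ)^2 * ((eCnt G S T * n - d * s * t)^2)
      ≤ (n:ℝ)^2 * (lam^2 * s * t * (n:ℝ)^2) := by
    have hL : (n:ℝ)^2 * ((eCnt G S T * n - d * s * t)^2)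
        = ((n:ℝ)^2 * eCnt G S T - n * (d * s * t))^2 := by ring
    rw [hL]
    refine hev.trans ?_
    have hfac : s * n * (n - s) * (t * n * (n - t)) ≤ s * t * (n:ℝ)^2 * (n:ℝ)^2 := by
      have h1 : (n - s) * (n - t) ≤ (n:ℝ) * n := by
        have hns : (0:ℝ) ≤ n - t := by linarith
        have : (n:ℝ) - s ≤ n := by linarith
        have h2 : (n:ℝ) - t ≤ n := by linarith
        exact mul_le_mul this h2 hns hn0.le
      have hstnn : (0:ℝ) ≤ s * t * n * n :=
        mul_nonneg (mul_nonneg (mul_nonneg hs0 ht0) hn0.le) hn0.le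
      calc s * n * (n - s) * (t * n * (n - t))
          = (s * t * n * n) * ((n - s) * (n - t)) := by ring
        _ ≤ (s * t * n * n) * ((n:ℝ) * n) := mul_le_mul_of_nonneg_left h1 hstnn
        _ = s * t * (n:ℝ)^2 * (n:ℝ)^2 := by ring
    calc lam ^ 2 * (s * n * (n - s) * (t * n * (n - t)))
        ≤ lam ^2 * (s * t * (n:ℝ)^2 * (n:ℝ)^2) :=
          mul_le_mul_of_nonneg_left hfac (sq_nonneg lam)
      _ = (n:ℝ)^2 * (lam^2 * s * t * (n:ℝ)^2) := by ring
  exact (mul_le_mul_iff_of_pos_left (by positivity : (0:ℝ) < (n:ℝ)^2)).mp key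

lemma le_of_sq_le_sq' (x y : ℝ) (h : x^2 ≤ y^2) (hy : 0 ≤ y) : x ≤ y := by
  by_contra hc
  push_neg at hc
  nlinarith

lemma main_estimate (hn : 1 < n) (hreg : G.IsRegularOfDegree d) (hd : (d:ℝ) ≤ n/2)
    (hd0 : 0 < d) (lam : ℝ) (hlam0 : 0 ≤ lam)
    (hub : ∀ i : Fin n, (i : ℕ) < n - 1 → |adjEig G i| ≤ lam)
    (Af Bf Sf : Finset (Fin n))
    (hABd : Disjoint Af Bf) (hASd : Disjoint Af Sf) (hBSd : Disjoint Bf Sf)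
    (hcover : ∀ v, v ∈ Af ∨ v ∈ Bf ∨ v ∈ Sf)
    (hAne : Af.Nonempty) (hBne : Bf.Nonempty) (hab : Af.card ≤ Bf.card)
    (hnoedge : ∀ x ∈ Af, ∀ y ∈ Bf, ¬ G.Adj x y)
    (hK : (Sf.card : ℝ) < d) :
    (d:ℝ) - 36*lam^2/d ≤ Sf.card := by
  classical
  have hd0' : (0:ℝ) < d := by exact_mod_cast hd0
  set a : ℝ := (Af.card : ℝ) with ha
  set b : ℝ := (Bf.card : ℝ) with hb
  set k : ℝ := (Sf.card : ℝ) with hk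
  have ha1 : (1:ℝ) ≤ a := by
    rw [ha]; exact_mod_cast Finset.card_pos.mpr hAne
  have hb1 : (1:ℝ) ≤ b := by
    rw [hb]; exact_mod_cast Finset.card_pos.mpr hBne
  have hab' : a ≤ b := by rw [ha, hb]; exact_mod_cast hab
  have hk0 : (0:ℝ) ≤ k := by rw [hk]; positivity
  have hn0 : (0:ℝ) < n := by positivity
  have hn1 : (0:ℝ) < (n:ℝ) := hn0
  -- goal reduction
  rw [sub_le_iff_le_add]
  by_cases hlamd : (d:ℝ) ≤ 6 * lam
  · -- trivial case: RHS at most 0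
    have h36 : (d:ℝ)*d ≤ 36*lam^2 := by nlinarith
    have : (d:ℝ) ≤ 36*lam^2/d := by
      rw [le_div_iff₀ hd0']
      nlinarith
    linarith
  push_neg at hlamd
  -- set partition and counting facts
  have hUeq : (Finset.univ : Finset (Fin n)) = Af ∪ (Bf ∪ Sf) := by
    ext v
    simp only [Finset.mem_univ, true_iff, Finset.mem_union]
    rcases hcover v with h | h | h
    · exact Or.inl h
    · exact Or.inr (Or.inl h)
    · exact Or.inr (Or.inr h)
  have hdisj1 : Disjoint Af (Bf ∪ Sf) := Finset.disjoint_union_right.mpr ⟨hABd, hASd⟩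
  have hcardn : a + b + k = (n:ℝ) := by
    have h1 : Af.card + (Bf.card + Sf.card) = n := by
      rw [← Finset.card_union_of_disjoint hBSd, ← Finset.card_union_of_disjoint hdisj1, ← hUeq]
      simp
    have h2 := congrArg (fun m : ℕ => (m:ℝ)) h1
    push_cast at h2
    rw [ha, hb, hk]
    linarith
  have row : eCnt G Af Finset.univ = d * a := by
    rw [eCnt]
    have : ∀ x ∈ Af, ∑ y, G.adjMatrix ℝ x y = (d:ℝ) := fun x _ => rowsum G hreg x
    rw [Finset.sum_congr rfl this, Finset.sum_const, nsmul_eq_mul, ha]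
    ring
  have split : eCnt G Af Finset.univ
      = eCnt G Af Af + (eCnt G Af Bf + eCnt G Af Sf) := by
    rw [eCnt, eCnt, eCnt, eCnt, ← Finset.sum_add_distrib, ← Finset.sum_add_distrib]
    refine Finset.sum_congr rfl fun x _ => ?_
    rw [hUeq, Finset.sum_union hdisj1, Finset.sum_union hBSd]
  have e0 : eCnt G Af Bf = 0 := by
    rw [eCnt]
    refine Finset.sum_eq_zero fun x hx => Finset.sum_eq_zero fun y hy => ?_
    rw [SimpleGraph.adjMatrix_apply, if_neg (hnoedge x hx y hy)]
  have eAS_le : eCnt G Af Sf ≤ a * k := by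
    rw [eCnt]
    have h1 : ∀ x ∈ Af, ∑ y ∈ Sf, G.adjMatrix ℝ x y ≤ k := by
      intro x _
      have : ∀ y ∈ Sf, G.adjMatrix ℝ x y ≤ 1 := by
        intro y _
        rw [SimpleGraph.adjMatrix_apply]
        split_ifs <;> norm_num
      calc ∑ y ∈ Sf, G.adjMatrix ℝ x y ≤ ∑ y ∈ Sf, (1:ℝ) := Finset.sum_le_sum this
        _ = k := by rw [Finset.sum_const, nsmul_eq_mul, mul_one, hk]
    calc ∑ x ∈ Af, ∑ y ∈ Sf, G.adjMatrix ℝ x y ≤ ∑ x ∈ Af, k :=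
        Finset.sum_le_sum h1
      _ = a * k := by rw [Finset.sum_const, nsmul_eq_mul, ha]
  have eAA_le : eCnt G Af Af ≤ a * (a - 1) := by
    rw [eCnt]
    have h1 : ∀ x ∈ Af, ∑ y ∈ Af, G.adjMatrix ℝ x y ≤ a - 1 := by
      intro x hx
      have hterm : ∀ y ∈ Af, G.adjMatrix ℝ x y ≤ 1 - (if y = x then (1:ℝ) else 0) := by
        intro y _
        rw [SimpleGraph.adjMatrix_apply]
        by_cases hyx : y = x
        · subst hyx
          simp [G.irrefl]
        · rw [if_neg hyx]
          split_ifs <;> norm_num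
      calc ∑ y ∈ Af, G.adjMatrix ℝ x y
          ≤ ∑ y ∈ Af, (1 - (if y = x then (1:ℝ) else 0)) := Finset.sum_le_sum hterm
        _ = a - 1 := by
            rw [Finset.sum_sub_distrib, Finset.sum_const, nsmul_eq_mul, mul_one,
              Finset.sum_ite_eq' Af x (fun _ => (1:ℝ)), if_pos hx, ha]
    calc ∑ x ∈ Af, ∑ y ∈ Af, G.adjMatrix ℝ x y ≤ ∑ x ∈ Af, (a - 1) :=
        Finset.sum_le_sum h1
      _ = a * (a-1) := by rw [Finset.sum_const, nsmul_eq_mul, ha]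
  have ha0 : (0:ℝ) < a := by linarith
  have hb0 : (0:ℝ) < b := by linarith
  have hcount : d * a ≤ eCnt G Af Af + eCnt G Af Sf := by
    rw [← row, split, e0]
    linarith
  -- eml facts
  have emlAB := eml G (by omega) hreg lam hub Af Bf
  have emlAA := eml G (by omega) hreg lam hub Af Af
  have emlAS := eml G (by omega) hreg lam hub Af Sf
  rw [e0, ← ha, ← hb] at emlAB
  rw [← ha] at emlAA
  rw [← ha, ← hk] at emlAS
  -- from emlAB : d^2 * (a*b) ≤ lam^2 * n^2
  have key1 : d^2 * (a*b) ≤ lam^2 * (n:ℝ)^2 := by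
    have hab0 : (0:ℝ) < a * b := mul_pos ha0 hb0
    refine le_of_mul_le_mul_right ?_ hab0
    calc d^2 * (a*b) * (a*b) = (0 * n - (d:ℝ) * a * b)^2 := by ring
      _ ≤ lam^2 * a * b * (n:ℝ)^2 := emlAB
      _ = lam^2 * (n:ℝ)^2 * (a*b) := by ring
  have hbn4 : (n:ℝ)/4 < b := by linarith
  -- a * d^2 * n ≤ 4 * lam^2 * n^2
  have key2 : a * d^2 * n ≤ 4 * lam^2 * (n:ℝ)^2 := by
    have h1 : d^2 * (a * ((n:ℝ)/4)) ≤ d^2 * (a*b) := by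
      have := mul_le_mul_of_nonneg_left hbn4.le (mul_nonneg (sq_nonneg (d:ℝ)) ha0.le)
      calc d^2 * (a * ((n:ℝ)/4)) = d^2 * a * ((n:ℝ)/4) := by ring
        _ ≤ d^2 * a * b := this
        _ = d^2 * (a*b) := by ring
    nlinarith [key1, h1]
  -- a < n / 9  (using lam < d/6)
  have ha9 : 9 * a < (n:ℝ) := by
    have hlam2 : 36 * lam^2 < d^2 := by
      nlinarith [mul_pos (show (0:ℝ) < d - 6*lam by linarith)
        (show (0:ℝ) < d + 6*lam by linarith)]
    have hp : 0 < (d^2/9 - 4*lam^2) * (n:ℝ)^2 :=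
      mul_pos (by linarith) (pow_pos hn0 2)
    have h2 : a * d^2 * n < (d^2/9) * (n:ℝ)^2 := by nlinarith [key2, hp]
    have h3 : a * (d^2 * n) < ((n:ℝ)/9) * (d^2 * n) := by nlinarith
    have h4 : (0:ℝ) < d^2 * n := by positivity
    have := lt_of_mul_lt_mul_right h3 h4.le
    linarith
  -- main case split
  by_cases hcase : a * d ≤ 36 * lam^2
  · -- small side A
    have hda : d * a ≤ a*(a-1) + a*k := by linarith [hcount, eAA_le, eAS_le]
    have hd_le : (d:ℝ) ≤ (a-1) + k := by
      refine le_of_mul_le_mul_right ?_ ha0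
      calc (d:ℝ) * a = d * a := by ring
        _ ≤ a*(a-1) + a*k := hda
        _ = ((a-1)+k)*a := by ring
    have : (d:ℝ) - k ≤ a - 1 := by linarith
    rcases le_or_gt ((d:ℝ) - k) 0 with hneg | hpos
    · have : (0:ℝ) ≤ 36*lam^2/d := by positivity
      linarith
    · have h1 : ((d:ℝ) - k) * d ≤ a * d := by
        have : (d:ℝ) - k ≤ a := by linarith
        exact mul_le_mul_of_nonneg_right this hd0'.le
      have h2 : ((d:ℝ) - k) * d ≤ 36 * lam^2 := le_trans h1 hcase
      have : (d:ℝ) - k ≤ 36*lam^2/d := by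
        rw [le_div_iff₀ hd0']
        exact h2
      linarith
  · -- large side A: contradiction
    exfalso
    push_neg at hcase
    have hlam2a : lam^2 * (a * k) ≤ (a*d/6)^2 := by
      have hkd : k ≤ (d:ℝ) := hK.le
      have m1 : lam^2 * (a*k) ≤ (a*d/36) * (a*k) :=
        mul_le_mul_of_nonneg_right (by linarith [hcase.le]) (mul_nonneg ha0.le hk0)
      have m2 : (a*d/36) * (a*k) ≤ (a*d/36) * (a*d) :=
        mul_le_mul_of_nonneg_left (mul_le_mul_of_nonneg_left hkd ha0.le) (by positivity)
      calc lam^2 * (a*k) ≤ (a*d/36) * (a*k) := m1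
        _ ≤ (a*d/36) * (a*d) := m2
        _ ≤ (a*d/6)^2 := by nlinarith [mul_nonneg ha0.le hd0'.le]
    have eAS_bound : eCnt G Af Sf * n - d * a * k ≤ a * d / 6 * n := by
      refine le_of_sq_le_sq' _ _ ?_ (by positivity)
      calc (eCnt G Af Sf * n - d * a * k)^2 ≤ lam^2 * a * k * (n:ℝ)^2 := emlAS
        _ = lam^2 * (a*k) * (n:ℝ)^2 := by ring
        _ ≤ (a*d/6)^2 * (n:ℝ)^2 := by nlinarith [sq_nonneg (n:ℝ)]
        _ = (a * d / 6 * n)^2 := by ring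
    have eAA_bound : eCnt G Af Af * n - d * a * a ≤ lam * a * n := by
      refine le_of_sq_le_sq' _ _ ?_ (by positivity)
      calc (eCnt G Af Af * n - d * a * a)^2 ≤ lam^2 * a * a * (n:ℝ)^2 := emlAA
        _ = (lam * a * n)^2 := by ring
    -- combine: d * a * n ≤ d*a*a + lam*a*n + d*a*k + a*d/6*n
    have hsum : d * a * n ≤ d*a*a + lam*a*n + (d*a*k + a*d/6*n) := by
      have h1 : d * a * n ≤ eCnt G Af Af * n + eCnt G Af Sf * n := by
        have h := mul_le_mul_of_nonneg_right hcount hn0.le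
        ring_nf at h ⊢
        linarith
      ring_nf at eAA_bound eAS_bound h1 ⊢
      linarith only [eAA_bound, eAS_bound, h1]
    have hdiv : d * n ≤ d*a + lam*n + (d*k + d/6*n) := by
      refine le_of_mul_le_mul_left ?_ ha0
      calc a * (d*n) = d * a * n := by ring
        _ ≤ d*a*a + lam*a*n + (d*a*k + a*d/6*n) := hsum
        _ = a * (d*a + lam*n + (d*k + d/6*n)) := by ring
    -- now: d*a < d*n/9, lam*n < d*n/6, so d*k > 5/9 * d * n, k > 5n/9 ≥ 10d/9 > d
    have h1 : d*a < d*(n:ℝ)/9 := by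
      have h := mul_lt_mul_of_pos_left ha9 hd0'
      linarith only [h]
    have h2 : lam*(n:ℝ) < d*(n:ℝ)/6 := by
      have h := mul_lt_mul_of_pos_right hlamd hn0
      linarith only [h]
    have h3 : d*k > (5/9) * (d*(n:ℝ)) := by
      linarith only [hdiv, h1, h2]
    have h4 : (5/9) * (n:ℝ) < k :=
      lt_of_mul_lt_mul_right (by linarith only [h3] : (5/9) * (n:ℝ) * d < k * d) hd0'.le
    have h5 : (n:ℝ) ≥ 2*d := by linarith
    linarith

end VCAux

theorem regular_vertex_connectivity_lower_bound {n d : ℕ} (hn : 1 < n)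
    (G : SimpleGraph (Fin n)) [DecidableRel G.Adj]
    (hreg : G.IsRegularOfDegree d) (hd : (d : ℝ) ≤ n / 2) (lam : ℝ)
    (hlam : lam = sSup {x : ℝ | ∃ i : Fin n, (i : ℕ) < n - 1 ∧ x = |adjEig G i|}) :
    (d : ℝ) - 36 * lam ^ 2 / d ≤ vertexConnectivity G := by
  classical
  have hn0 : 0 < n := by omega
  have hSfin : {x : ℝ | ∃ i : Fin n, (i : ℕ) < n - 1 ∧ x = |adjEig G i|}.Finite := by
    refine Set.Finite.subset (Set.finite_range (fun i : Fin n => |adjEig G i|)) ?_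
    rintro x ⟨i, _, rfl⟩
    exact ⟨i, rfl⟩
  have hub : ∀ i : Fin n, (i : ℕ) < n - 1 → |adjEig G i| ≤ lam := by
    intro i hi
    rw [hlam]
    exact le_csSup hSfin.bddAbove ⟨i, hi, rfl⟩
  have hlam0 : 0 ≤ lam := by
    have h0 : ((⟨0, hn0⟩ : Fin n) : ℕ) < n - 1 := by simp; omega
    exact le_trans (abs_nonneg _) (hub ⟨0, hn0⟩ h0)
  by_cases hd0 : d = 0
  · subst hd0
    simp only [Nat.cast_zero, div_zero]
    have : (0:ℝ) ≤ (vertexConnectivity G : ℝ) := by positivity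
    linarith
  have hdpos : 0 < d := Nat.pos_of_ne_zero hd0
  have hd0' : (0:ℝ) < d := by exact_mod_cast hdpos
  have hdivnn : (0:ℝ) ≤ 36 * lam ^ 2 / d := by positivity
  rw [vertexConnectivity]
  split_ifs with hex
  · -- a cut exists
    set K := sInf {k | ∃ S : Finset (Fin n), S.card = k ∧
      ¬ (G.induce ((↑S : Set (Fin n))ᶜ)).Preconnected} with hKdef
    have hne : {k | ∃ S : Finset (Fin n), S.card = k ∧
        ¬ (G.induce ((↑S : Set (Fin n))ᶜ)).Preconnected}.Nonempty := by
      obtain ⟨S, hS⟩ := hex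
      exact ⟨S.card, S, rfl, hS⟩
    obtain ⟨S, hScard, hSdisc⟩ := Nat.sInf_mem hne
    rcases le_or_gt (d:ℝ) (K:ℝ) with hdK | hKd
    · linarith
    · simp only [SimpleGraph.Preconnected, not_forall] at hSdisc
      obtain ⟨u, w, hur⟩ := hSdisc
      set H := G.induce ((↑S : Set (Fin n))ᶜ) with hH
      set P : Finset (Fin n) := Finset.univ.filter
        (fun v => ∃ h : v ∈ ((↑S : Set (Fin n))ᶜ), H.Reachable u ⟨v, h⟩) with hP
      set Q : Finset (Fin n) := Finset.univ.filter
        (fun v => ∃ h : v ∈ ((↑S : Set (Fin n))ᶜ), ¬ H.Reachable u ⟨v, h⟩) with hQ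
      have hdisjPQ : Disjoint P Q := by
        rw [Finset.disjoint_left]
        intro v hvP hvQ
        rw [hP, Finset.mem_filter] at hvP
        rw [hQ, Finset.mem_filter] at hvQ
        obtain ⟨-, h1, hr⟩ := hvP
        obtain ⟨-, h2, hnr⟩ := hvQ
        exact hnr hr
      have hdisjPS : Disjoint P S := by
        rw [Finset.disjoint_left]
        intro v hvP hvS
        rw [hP, Finset.mem_filter] at hvP
        obtain ⟨-, h1, -⟩ := hvP
        exact h1 (by simpa using hvS)
      have hdisjQS : Disjoint Q S := by
        rw [Finset.disjoint_left]
        intro v hvQ hvS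
        rw [hQ, Finset.mem_filter] at hvQ
        obtain ⟨-, h1, -⟩ := hvQ
        exact h1 (by simpa using hvS)
      have hcover : ∀ v, v ∈ P ∨ v ∈ Q ∨ v ∈ S := by
        intro v
        by_cases hvS : v ∈ S
        · exact Or.inr (Or.inr hvS)
        · have hv : v ∈ ((↑S : Set (Fin n))ᶜ) := by simpa using hvS
          by_cases hr : H.Reachable u ⟨v, hv⟩
          · exact Or.inl (by rw [hP, Finset.mem_filter]; exact ⟨Finset.mem_univ v, hv, hr⟩)
          · exact Or.inr (Or.inl (by rw [hQ, Finset.mem_filter]; exact ⟨Finset.mem_univ v, hv, hr⟩))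
      have hPne : P.Nonempty := by
        refine ⟨(u : Fin n), ?_⟩
        rw [hP, Finset.mem_filter]
        refine ⟨Finset.mem_univ _, u.2, ?_⟩
        exact SimpleGraph.Reachable.refl _
      have hQne : Q.Nonempty := by
        refine ⟨(w : Fin n), ?_⟩
        rw [hQ, Finset.mem_filter]
        exact ⟨Finset.mem_univ _, w.2, hur⟩
      have hnoedge : ∀ x ∈ P, ∀ y ∈ Q, ¬ G.Adj x y := by
        intro x hx y hy hadj
        rw [hP, Finset.mem_filter] at hx
        rw [hQ, Finset.mem_filter] at hy
        obtain ⟨-, h1, hr⟩ := hx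
        obtain ⟨-, h2, hnr⟩ := hy
        apply hnr
        refine hr.trans (SimpleGraph.Adj.reachable ?_)
        exact hadj
      have goal' : (d:ℝ) - 36*lam^2/d ≤ (S.card : ℝ) := by
        rcases le_total P.card Q.card with hPQ | hPQ
        · exact VCAux.main_estimate G hn hreg hd hdpos lam hlam0 hub P Q S
            hdisjPQ hdisjPS hdisjQS hcover hPne hQne hPQ hnoedge
            (by rw [hScard]; exact hKd)
        · refine VCAux.main_estimate G hn hreg hd hdpos lam hlam0 hub Q P S
            hdisjPQ.symm hdisjQS hdisjPS ?_ hQne hPne hPQ ?_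
            (by rw [hScard]; exact hKd)
          · intro v
            rcases hcover v with h | h | h
            · exact Or.inr (Or.inl h)
            · exact Or.inl h
            · exact Or.inr (Or.inr h)
          · intro x hx y hy hadj
            exact hnoedge y hy x hx hadj.symm
      rw [hScard] at goal'
      exact goal'
  · -- no cut: vertex connectivity is n - 1
    have hcast : ((n - 1 : ℕ) : ℝ) = (n:ℝ) - 1 := by
      rw [Nat.cast_sub (by omega : 1 ≤ n)]
      norm_num
    rw [hcast]
    have h2 : (2:ℝ) ≤ n := by exact_mod_cast hn
    linarith
end
end

section
/- Let G be a graph on n vertices with average degree d and minimum degree δ. If the Laplacian eigenvalues satisfy 2 ≤ σ_1 and σ_{n−1} ≤ 2d − 2, then the edge connectivity of G equals δ, i.e., κ′(G) = δ. -/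
open Finset

noncomputable section

/- The edge connectivity: the least number of edges whose deletion leaves a graph
that is not preconnected. -/
open scoped Classical in
def edgeConnectivity {n : ℕ} (G : SimpleGraph (Fin n)) : ℕ :=
  sInf {k | ∃ F : Finset (Sym2 (Fin n)), F.card = k ∧ (↑F : Set (Sym2 (Fin n))) ⊆ G.edgeSet ∧
    ¬ (G.deleteEdges (↑F : Set (Sym2 (Fin n)))).Preconnected}

section Aux

open Matrix

set_option linter.unusedSectionVars false

variable {m : Type*} [Fintype m] [DecidableEq m]

lemma star_unitary_mulVec {A : Matrix m m ℝ} (hA : A.IsHermitian) (x : m → ℝ) :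
    star (hA.eigenvectorUnitary : Matrix m m ℝ) *ᵥ x
      = x ᵥ* (hA.eigenvectorUnitary : Matrix m m ℝ) := by
  rw [star_eq_conjTranspose, conjTranspose_eq_transpose_of_trivial, mulVec_transpose]

lemma quad_expand {A : Matrix m m ℝ} (hA : A.IsHermitian) (x : m → ℝ) :
    x ⬝ᵥ (A *ᵥ x) = ∑ j, hA.eigenvalues j *
      ((star (hA.eigenvectorUnitary : Matrix m m ℝ) *ᵥ x) j)^2 := by
  set U := (hA.eigenvectorUnitary : Matrix m m ℝ) with hU
  have h1 : x ⬝ᵥ (A *ᵥ x)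
      = (star U *ᵥ x) ⬝ᵥ (diagonal (RCLike.ofReal ∘ hA.eigenvalues) *ᵥ (star U *ᵥ x)) := by
    conv_lhs => rw [hA.spectral_theorem, Unitary.conjStarAlgAut_apply]
    rw [← mulVec_mulVec, ← mulVec_mulVec, dotProduct_mulVec x U, star_unitary_mulVec hA]
  rw [h1]
  simp [dotProduct, mulVec_diagonal]
  congr 1; ext j; ring

lemma dot_self_expand {A : Matrix m m ℝ} (hA : A.IsHermitian) (x : m → ℝ) :
    x ⬝ᵥ x = ∑ j, ((star (hA.eigenvectorUnitary : Matrix m m ℝ) *ᵥ x) j)^2 := by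
  set U := (hA.eigenvectorUnitary : Matrix m m ℝ) with hU
  have h2 : ∑ j, ((star U *ᵥ x) j)^2 = (star U *ᵥ x) ⬝ᵥ (star U *ᵥ x) := by
    simp [dotProduct, sq]
  rw [h2]
  nth_rewrite 1 [star_unitary_mulVec hA]
  rw [← dotProduct_mulVec, mulVec_mulVec,
    (Matrix.mem_unitaryGroup_iff).mp hA.eigenvectorUnitary.2, one_mulVec]

-- kernel coordinates vanish on nonzero eigenvalues
lemma ker_coord_zero {A : Matrix m m ℝ} (hA : A.PosSemidef) (v : m → ℝ)
    (hv : A *ᵥ v = 0) (j : m) (hj : hA.1.eigenvalues j ≠ 0) :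
    (star (hA.1.eigenvectorUnitary : Matrix m m ℝ) *ᵥ v) j = 0 := by
  have h0 : v ⬝ᵥ (A *ᵥ v) = 0 := by rw [hv, dotProduct_zero]
  rw [quad_expand hA.1 v] at h0
  have hterm : ∀ i ∈ Finset.univ, (0:ℝ) ≤ hA.1.eigenvalues i *
      ((star (hA.1.eigenvectorUnitary : Matrix m m ℝ) *ᵥ v) i)^2 :=
    fun i _ => mul_nonneg (hA.eigenvalues_nonneg i) (sq_nonneg _)
  have := (Finset.sum_eq_zero_iff_of_nonneg hterm).mp h0 j (Finset.mem_univ j)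
  have hsq := (mul_eq_zero.mp this).resolve_left hj
  exact pow_eq_zero_iff (by norm_num) |>.mp hsq

lemma star_mulVec_apply {m : Type*} [Fintype m] (U : Matrix m m ℝ) (v : m → ℝ) (j : m) :
    (star U *ᵥ v) j = ∑ i, U i j * v i := by
  simp [mulVec, dotProduct, Matrix.star_apply]

lemma lapEig_rayleigh {n : ℕ} (hn : 1 < n) (G : SimpleGraph (Fin n)) [DecidableRel G.Adj]
    (x : Fin n → ℝ) (hx : ∑ i, x i = 0) :
    lapEig G ⟨1, hn⟩ * (x ⬝ᵥ x) ≤ x ⬝ᵥ (G.lapMatrix ℝ *ᵥ x) := by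
  classical
  have hP : (G.lapMatrix ℝ).PosSemidef := SimpleGraph.posSemidef_lapMatrix ℝ G
  set L := G.lapMatrix ℝ with hLdef
  set hL : L.IsHermitian := hP.1 with hLh
  set μ := hL.eigenvalues with hμ
  set π := Tuple.sort μ with hπ
  have hlap : lapEig G ⟨1, hn⟩ = μ (π ⟨1, hn⟩) := rfl
  have hxx : 0 ≤ x ⬝ᵥ x := Finset.sum_nonneg fun i _ => mul_self_nonneg _
  rcases le_or_gt (μ (π ⟨1, hn⟩)) 0 with hneg | hpos
  · rw [hlap]
    refine le_trans (mul_nonpos_of_nonpos_of_nonneg hneg hxx) ?_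
    simpa using hP.dotProduct_mulVec_nonneg x
  · have hge : ∀ j, j ≠ π ⟨0, by omega⟩ → μ (π ⟨1, hn⟩) ≤ μ j := by
      intro j hj
      have hrepr : j = π (π.symm j) := (Equiv.apply_symm_apply π j).symm
      rw [hrepr]
      apply Tuple.monotone_sort μ
      have h0 : (π.symm j : Fin n).val ≠ 0 := by
        intro h
        apply hj
        rw [hrepr]
        congr 1
        exact Fin.ext h
      exact Fin.mk_le_of_le_val (by omega)
    have hone : L *ᵥ (fun _ => (1:ℝ)) = 0 := G.lapMatrix_mulVec_const_eq_zero
    have hdet : L.det = 0 := by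
      rw [← Matrix.exists_mulVec_eq_zero_iff]
      refine ⟨fun _ => (1:ℝ), ?_, hone⟩
      intro h
      exact one_ne_zero (congrFun h ⟨0, by omega⟩)
    have hex : ∃ i, μ i = 0 := by
      rw [hL.det_eq_prod_eigenvalues] at hdet
      obtain ⟨i, _, hi⟩ := Finset.prod_eq_zero_iff.mp hdet
      exact ⟨i, by exact_mod_cast hi⟩
    set i₀ := π ⟨0, by omega⟩ with hi₀
    have hzero : μ i₀ = 0 := by
      obtain ⟨i, hi⟩ := hex
      by_cases h : i = i₀
      · rwa [← h]
      · exact absurd (hge i h) (by rw [hi]; linarith)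
    set U := (hL.eigenvectorUnitary : Matrix (Fin n) (Fin n) ℝ) with hUdef
    have hz : ∀ j, j ≠ i₀ → (star U *ᵥ (fun _ => (1:ℝ))) j = 0 := by
      intro j hj
      refine ker_coord_zero hP _ hone j ?_
      intro h
      have h' : μ j = 0 := h
      have := hge j hj
      rw [h'] at this
      linarith
    have hrec : ∀ i, U i i₀ * (star U *ᵥ (fun _ => (1:ℝ))) i₀ = 1 := by
      intro i
      have h1 : U *ᵥ (star U *ᵥ (fun _ => (1:ℝ))) = fun _ => (1:ℝ) := by
        rw [mulVec_mulVec, (Matrix.mem_unitaryGroup_iff).mp hL.eigenvectorUnitary.2, one_mulVec]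
      have h2 := congrFun h1 i
      rw [show (U *ᵥ (star U *ᵥ fun _ => (1:ℝ))) i
            = ∑ j, U i j * (star U *ᵥ fun _ => (1:ℝ)) j by simp [mulVec, dotProduct]] at h2
      rwa [Finset.sum_eq_single i₀ (fun j _ hj => by rw [hz j hj, mul_zero])
        (fun h => absurd (Finset.mem_univ i₀) h)] at h2
    have hz0 : (star U *ᵥ (fun _ => (1:ℝ))) i₀ ≠ 0 := by
      intro h
      have := hrec ⟨0, by omega⟩
      rw [h, mul_zero] at this
      exact one_ne_zero this.symm
    have hy0 : (star U *ᵥ x) i₀ = 0 := by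
      have hkey : (star U *ᵥ (fun _ => (1:ℝ))) i₀ * ((star U *ᵥ x) i₀) = 0 := by
        rw [show (star U *ᵥ x) i₀ = ∑ i, U i i₀ * x i from star_mulVec_apply U x i₀,
          Finset.mul_sum]
        calc ∑ i, (star U *ᵥ fun _ => (1:ℝ)) i₀ * (U i i₀ * x i)
            = ∑ i, (U i i₀ * (star U *ᵥ fun _ => (1:ℝ)) i₀) * x i := by
              congr 1; ext i; ring
          _ = ∑ i, x i := by simp [hrec]
          _ = 0 := hx
      exact (mul_eq_zero.mp hkey).resolve_left hz0
    rw [hlap, quad_expand hL x, dot_self_expand hL x, Finset.mul_sum]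
    apply Finset.sum_le_sum
    intro j _
    by_cases hj : j = i₀
    · rw [hj, hy0]
      simp
    · exact mul_le_mul_of_nonneg_right (hge j hj) (sq_nonneg _)

variable {n : ℕ}

-- injection of crossing pairs into the cut
lemma cross_card_le (G : SimpleGraph (Fin n)) [DecidableRel G.Adj]
    (S : Finset (Fin n)) (F : Finset (Sym2 (Fin n)))
    (hcross : ∀ v w, G.Adj v w → v ∈ S → w ∉ S → s(v, w) ∈ F) :
    (S.sigma fun v => G.neighborFinset v \ S).card ≤ F.card := by
  classical
  apply Finset.card_le_card_of_injOn (fun p => s(p.1, p.2))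
  · intro p hp
    rw [Finset.mem_coe, Finset.mem_sigma] at hp
    obtain ⟨h1, h2⟩ := hp
    rw [Finset.mem_sdiff, SimpleGraph.mem_neighborFinset] at h2
    exact hcross _ _ h2.1 h1 h2.2
  · intro p hp q hq hpq
    rw [Finset.mem_coe, Finset.mem_sigma, Finset.mem_sdiff] at hp hq
    simp only [Sym2.eq_iff] at hpq
    rcases hpq with ⟨h1, h2⟩ | ⟨h1, h2⟩
    · exact Sigma.ext h1 (heq_of_eq h2)
    · exact absurd (h1 ▸ hp.1) hq.2.2

-- the counting lemma: each side of a small cut has > minDegree vertices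
lemma side_large (G : SimpleGraph (Fin n)) [DecidableRel G.Adj]
    (S : Finset (Fin n)) (F : Finset (Sym2 (Fin n)))
    (hcross : ∀ v w, G.Adj v w → v ∈ S → w ∉ S → s(v, w) ∈ F)
    (hne : S.Nonempty) (hk : F.card + 1 ≤ G.minDegree) :
    G.minDegree + 1 ≤ S.card := by
  classical
  have hsig := cross_card_le G S F hcross
  rw [Finset.card_sigma] at hsig
  have hsplit : ∀ v ∈ S, G.degree v ≤ (S.card - 1) + (G.neighborFinset v \ S).card := by
    intro v hv
    have h1 : (G.neighborFinset v ∩ S).card + (G.neighborFinset v \ S).card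
        = G.degree v := by
      rw [Finset.card_inter_add_card_sdiff]; rfl
    have h2 : G.neighborFinset v ∩ S ⊆ S.erase v := by
      intro w hw
      rw [Finset.mem_inter, SimpleGraph.mem_neighborFinset] at hw
      exact Finset.mem_erase.mpr ⟨hw.1.ne', hw.2⟩
    have h3 : (G.neighborFinset v ∩ S).card ≤ S.card - 1 := by
      calc (G.neighborFinset v ∩ S).card ≤ (S.erase v).card := Finset.card_le_card h2
        _ = S.card - 1 := Finset.card_erase_of_mem hv
    omega
  have hsum : S.card * G.minDegree ≤ S.card * (S.card - 1) + F.card := by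
    calc S.card * G.minDegree = ∑ _v ∈ S, G.minDegree := by rw [Finset.sum_const, smul_eq_mul]
      _ ≤ ∑ v ∈ S, G.degree v := Finset.sum_le_sum fun v _ => G.minDegree_le_degree v
      _ ≤ ∑ v ∈ S, ((S.card - 1) + (G.neighborFinset v \ S).card) :=
          Finset.sum_le_sum hsplit
      _ = S.card * (S.card - 1) + ∑ v ∈ S, (G.neighborFinset v \ S).card := by
          rw [Finset.sum_add_distrib, Finset.sum_const, smul_eq_mul]
      _ ≤ S.card * (S.card - 1) + F.card := by omega
  obtain ⟨t, ht⟩ : ∃ t, S.card = t + 1 := ⟨S.card - 1, by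
    have := Finset.card_pos.mpr hne; omega⟩
  rw [ht] at hsum ⊢
  simp only [Nat.add_sub_cancel] at hsum
  by_contra hcon
  push_neg at hcon
  have hle : t + 1 ≤ G.minDegree := by omega
  nlinarith [Nat.mul_le_mul_right t hle]

lemma double_count (G : SimpleGraph (Fin n)) [DecidableRel G.Adj] (S : Finset (Fin n)) :
    ∑ i, ∑ j, (if G.Adj i j ∧ i ∈ S ∧ j ∉ S then (1:ℝ) else 0)
      = ((S.sigma fun v => G.neighborFinset v \ S).card : ℝ) := by
  classical
  rw [Finset.card_sigma]
  push_cast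
  have h1 : ∀ i : Fin n, ∑ j, (if G.Adj i j ∧ i ∈ S ∧ j ∉ S then (1:ℝ) else 0)
      = if i ∈ S then ((G.neighborFinset i \ S).card : ℝ) else 0 := by
    intro i
    by_cases h : i ∈ S
    · rw [if_pos h]
      have he : ∀ j, (if G.Adj i j ∧ i ∈ S ∧ j ∉ S then (1:ℝ) else 0)
          = (if G.Adj i j ∧ j ∉ S then (1:ℝ) else 0) := fun j => by simp [h]
      rw [Finset.sum_congr rfl fun j _ => he j, Finset.sum_boole]
      congr 1
      congr 1
      ext j
      simp [SimpleGraph.mem_neighborFinset]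
    · simp [h]
  rw [Finset.sum_congr rfl (fun i _ => h1 i), Finset.sum_ite_mem, Finset.univ_inter]

lemma key_ineq (hn : 1 < n) (G : SimpleGraph (Fin n)) [DecidableRel G.Adj]
    (h1 : 2 ≤ lapEig G ⟨1, hn⟩) (S : Finset (Fin n)) (F : Finset (Sym2 (Fin n)))
    (hcS : ∀ v w, G.Adj v w → v ∈ S → w ∉ S → s(v, w) ∈ F)
    (hcT : ∀ v w, G.Adj v w → v ∈ Sᶜ → w ∉ Sᶜ → s(v, w) ∈ F) :
    2 * (S.card * Sᶜ.card) ≤ n * F.card := by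
  classical
  set s : ℝ := (S.card : ℝ) with hs
  set t : ℝ := (Sᶜ.card : ℝ) with ht
  have hst : s + t = n := by
    rw [hs, ht]
    exact_mod_cast congrArg (Nat.cast : ℕ → ℝ)
      (by rw [Finset.card_add_card_compl, Fintype.card_fin])
  set x : Fin n → ℝ := fun w => if w ∈ S then (n : ℝ) - s else -s with hxdef
  have hxsum : ∑ i, x i = 0 := by
    have hxw : ∀ w, x w = (n : ℝ) * (if w ∈ S then 1 else 0) - s := by
      intro w; by_cases h : w ∈ S <;> simp [hxdef, h]
    rw [Finset.sum_congr rfl (fun w _ => hxw w), Finset.sum_sub_distrib, ← Finset.mul_sum,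
      Finset.sum_boole, Finset.sum_const, Finset.card_univ, Fintype.card_fin]
    simp only [Finset.filter_mem_eq_inter, Finset.univ_inter, nsmul_eq_mul]
    rw [← hs]
    ring
  have hxx : x ⬝ᵥ x = s * t * n := by
    have hterm : ∀ w, x w * x w
        = ((n:ℝ)^2 - 2*n*s) * (if w ∈ S then 1 else 0) + s^2 := by
      intro w; by_cases h : w ∈ S <;> simp [hxdef, h] <;> ring
    rw [dotProduct, Finset.sum_congr rfl (fun w _ => hterm w),
      Finset.sum_add_distrib, ← Finset.mul_sum, Finset.sum_boole, Finset.sum_const,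
      Finset.card_univ, Fintype.card_fin]
    simp only [Finset.filter_mem_eq_inter, Finset.univ_inter, nsmul_eq_mul]
    rw [← hs]
    linear_combination (-(n:ℝ) * s) * hst
  have hc1 := cross_card_le G S F hcS
  have hc2 := cross_card_le G Sᶜ F hcT
  have hquad : x ⬝ᵥ (G.lapMatrix ℝ *ᵥ x) ≤ (n:ℝ)^2 * F.card := by
    rw [← Matrix.toLinearMap₂'_apply', SimpleGraph.lapMatrix_toLinearMap₂']
    have hbound : ∀ i j : Fin n, (if G.Adj i j then (x i - x j)^2 else 0)
        ≤ (n:ℝ)^2 * ((if G.Adj i j ∧ i ∈ S ∧ j ∉ S then (1:ℝ) else 0)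
          + (if G.Adj i j ∧ i ∈ Sᶜ ∧ j ∉ Sᶜ then (1:ℝ) else 0)) := by
      intro i j
      by_cases ha : G.Adj i j
      · by_cases hi : i ∈ S <;> by_cases hj : j ∈ S <;>
          · simp only [hxdef, ha, hi, hj, Finset.mem_compl, if_true, if_false, true_and,
              and_true, and_false, false_and, not_true_eq_false, not_false_eq_true, ite_true,
              ite_false, and_self]
            nlinarith [hst]
      · simp only [ha, false_and, if_false]
        positivity
    have hsums : (∑ i, ∑ j, if G.Adj i j then (x i - x j)^2 else 0)
        ≤ ∑ i, ∑ j, (n:ℝ)^2 * ((if G.Adj i j ∧ i ∈ S ∧ j ∉ S then (1:ℝ) else 0)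
          + (if G.Adj i j ∧ i ∈ Sᶜ ∧ j ∉ Sᶜ then (1:ℝ) else 0)) :=
      Finset.sum_le_sum fun i _ => Finset.sum_le_sum fun j _ => hbound i j
    have hev : ∑ i, ∑ j, (n:ℝ)^2 * ((if G.Adj i j ∧ i ∈ S ∧ j ∉ S then (1:ℝ) else 0)
          + (if G.Adj i j ∧ i ∈ Sᶜ ∧ j ∉ Sᶜ then (1:ℝ) else 0))
        = (n:ℝ)^2 * (((S.sigma fun v => G.neighborFinset v \ S).card : ℝ)
          + ((Sᶜ.sigma fun v => G.neighborFinset v \ Sᶜ).card : ℝ)) := by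
      rw [← double_count G S, ← double_count G Sᶜ, ← Finset.sum_add_distrib, Finset.mul_sum]
      congr 1
      ext i
      rw [← Finset.sum_add_distrib, Finset.mul_sum]
    have he1 : ((S.sigma fun v => G.neighborFinset v \ S).card : ℝ) ≤ F.card := by
      exact_mod_cast hc1
    have he2 : ((Sᶜ.sigma fun v => G.neighborFinset v \ Sᶜ).card : ℝ) ≤ F.card := by
      exact_mod_cast hc2
    have hn2 : (0:ℝ) ≤ (n:ℝ)^2 := sq_nonneg _
    calc (∑ i, ∑ j, if G.Adj i j then (x i - x j)^2 else 0) / 2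
        ≤ ((n:ℝ)^2 * (((S.sigma fun v => G.neighborFinset v \ S).card : ℝ)
          + ((Sᶜ.sigma fun v => G.neighborFinset v \ Sᶜ).card : ℝ))) / 2 := by
          rw [← hev]; linarith
      _ ≤ (n:ℝ)^2 * F.card := by nlinarith
  have hray := lapEig_rayleigh hn G x hxsum
  have hxx0 : (0:ℝ) ≤ x ⬝ᵥ x := Finset.sum_nonneg fun i _ => mul_self_nonneg _
  have hchain : 2 * (s * t * n) ≤ (n:ℝ)^2 * F.card := by
    calc 2 * (s * t * n) = 2 * (x ⬝ᵥ x) := by rw [hxx]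
      _ ≤ lapEig G ⟨1, hn⟩ * (x ⬝ᵥ x) := mul_le_mul_of_nonneg_right h1 hxx0
      _ ≤ x ⬝ᵥ (G.lapMatrix ℝ *ᵥ x) := hray
      _ ≤ (n:ℝ)^2 * F.card := hquad
  have hn0 : (0:ℝ) < n := by positivity
  have hfinal : 2 * (s * t) ≤ (n:ℝ) * F.card := by
    rw [show (n:ℝ)^2 * F.card = ((n:ℝ) * F.card) * n by ring] at hchain
    rw [show 2 * (s * t * n) = (2 * (s * t)) * n by ring] at hchain
    exact le_of_mul_le_mul_right hchain hn0
  rw [hs, ht] at hfinal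
  exact_mod_cast hfinal


theorem edge_connectivity_eq_minDegree' {n : ℕ} (hn : 1 < n) (G : SimpleGraph (Fin n))
    [DecidableRel G.Adj]
    (h1 : 2 ≤ lapEig G ⟨1, hn⟩) :
    edgeConnectivity G = G.minDegree := by
  classical
  have hne : Nonempty (Fin n) := ⟨⟨0, by omega⟩⟩
  obtain ⟨v, hv⟩ := G.exists_minimal_degree_vertex
  have hmem : G.minDegree ∈ {k | ∃ F : Finset (Sym2 (Fin n)), F.card = k ∧
      (↑F : Set (Sym2 (Fin n))) ⊆ G.edgeSet ∧
      ¬ (G.deleteEdges (↑F : Set (Sym2 (Fin n)))).Preconnected} := by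
    refine ⟨G.incidenceFinset v, ?_, ?_, ?_⟩
    · rw [SimpleGraph.card_incidenceFinset_eq_degree, hv]
    · intro e he
      rw [Finset.mem_coe, SimpleGraph.mem_incidenceFinset] at he
      exact he.1
    · intro hpre
      obtain ⟨w, hvw⟩ : ∃ w : Fin n, v ≠ w := by
        rcases eq_or_ne v ⟨0, by omega⟩ with h | h
        · refine ⟨⟨1, hn⟩, ?_⟩
          rw [h]
          intro hc
          have := congrArg Fin.val hc
          simp at this
        · exact ⟨⟨0, by omega⟩, h⟩
      obtain ⟨p⟩ := hpre v w
      cases p with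
      | nil => exact hvw rfl
      | cons h q =>
        rw [SimpleGraph.deleteEdges_adj] at h
        refine h.2 ?_
        rw [Finset.mem_coe, SimpleGraph.mem_incidenceFinset]
        exact ⟨(SimpleGraph.mem_edgeSet G).mpr h.1, Sym2.mem_mk_left _ _⟩
  apply le_antisymm
  · exact Nat.sInf_le hmem
  · refine le_csInf ⟨_, hmem⟩ ?_
    rintro k ⟨F, hcard, hsub, hnp⟩
    by_contra hlt
    push_neg at hlt
    have hk : F.card + 1 ≤ G.minDegree := by omega
    rw [SimpleGraph.Preconnected] at hnp
    push_neg at hnp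
    obtain ⟨u, w, hur⟩ := hnp
    set G' := G.deleteEdges (↑F : Set (Sym2 (Fin n))) with hG'
    set S : Finset (Fin n) := Finset.univ.filter (fun z => G'.Reachable u z) with hSdef
    have huS : u ∈ S := by
      rw [hSdef, Finset.mem_filter]
      exact ⟨Finset.mem_univ _, SimpleGraph.Reachable.refl u⟩
    have hwS : w ∉ S := by
      rw [hSdef, Finset.mem_filter]
      rintro ⟨-, h⟩
      exact hur h
    have hcS : ∀ a b, G.Adj a b → a ∈ S → b ∉ S → s(a, b) ∈ F := by
      intro a b hab haS hbS
      by_contra hF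
      have hadj : G'.Adj a b := by
        rw [hG', SimpleGraph.deleteEdges_adj]
        exact ⟨hab, fun hc => hF (Finset.mem_coe.mp hc)⟩
      rw [hSdef, Finset.mem_filter] at haS hbS
      exact hbS ⟨Finset.mem_univ _, haS.2.trans hadj.reachable⟩
    have hcT : ∀ a b, G.Adj a b → a ∈ Sᶜ → b ∉ Sᶜ → s(a, b) ∈ F := by
      intro a b hab haT hbT
      rw [Finset.mem_compl] at haT
      rw [Finset.mem_compl, not_not] at hbT
      have := hcS b a hab.symm hbT haT
      rwa [Sym2.eq_swap] at this
    have hS1 := side_large G S F hcS ⟨u, huS⟩ hk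
    have hS2 := side_large G Sᶜ F hcT ⟨w, Finset.mem_compl.mpr hwS⟩ hk
    have hkey := key_ineq hn G h1 S F hcS hcT
    have hsum : S.card + Sᶜ.card = n := by
      rw [Finset.card_add_card_compl, Fintype.card_fin]
    have e1 : (F.card + 2) * Sᶜ.card ≤ S.card * Sᶜ.card :=
      Nat.mul_le_mul_right _ (by omega)
    have e2 : S.card * (F.card + 2) ≤ S.card * Sᶜ.card :=
      Nat.mul_le_mul_left _ (by omega)
    have hbig : (F.card + 2) * n ≤ 2 * (S.card * Sᶜ.card) := by
      have hx : (F.card + 2) * (S.card + Sᶜ.card) ≤ 2 * (S.card * Sᶜ.card) := by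
        nlinarith [e1, e2]
      rwa [hsum] at hx
    nlinarith [hbig, hkey, hn]

theorem edge_connectivity_eq_minDegree {n : ℕ} (hn : 1 < n) (G : SimpleGraph (Fin n))
    [DecidableRel G.Adj]
    (h1 : 2 ≤ lapEig G ⟨1, hn⟩)
    (h2 : lapEig G ⟨n - 1, by omega⟩ ≤ 2 * avgDeg G - 2) :
    edgeConnectivity G = G.minDegree :=
  edge_connectivity_eq_minDegree' hn G h1

end Aux
end
end

section
/- Let G be a graph on n vertices with minimum degree δ ≥ 1 and largest Laplacian eigenvalue σ_{n−1}. Then the chromatic number satisfies χ(G) ≥ σ_{n−1}/(σ_{n−1} − δ). -/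
open Finset Matrix

noncomputable section

lemma rayleigh_max {n : ℕ} {A : Matrix (Fin n) (Fin n) ℝ} (hA : A.IsHermitian) {M : ℝ}
    (hM : ∀ i, hA.eigenvalues i ≤ M) (x : Fin n → ℝ) :
    x ⬝ᵥ (A *ᵥ x) ≤ M * (x ⬝ᵥ x) := by
  set U : Matrix (Fin n) (Fin n) ℝ := (hA.eigenvectorUnitary : Matrix (Fin n) (Fin n) ℝ) with hUdef
  have hU : U * star U = 1 := (Matrix.mem_unitaryGroup_iff).mp hA.eigenvectorUnitary.2
  set y : Fin n → ℝ := star U *ᵥ x with hy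
  have hyx : star U *ᵥ x = x ᵥ* U := by
    rw [Matrix.star_eq_conjTranspose, Matrix.conjTranspose_eq_transpose_of_trivial,
      Matrix.mulVec_transpose]
  have hnorm : y ⬝ᵥ y = x ⬝ᵥ x := by
    rw [hy, hyx, ← Matrix.dotProduct_mulVec, ← hyx, Matrix.mulVec_mulVec, hU, Matrix.one_mulVec]
  have hform : x ⬝ᵥ (A *ᵥ x) = ∑ i, hA.eigenvalues i * (y i)^2 := by
    conv_lhs => rw [hA.spectral_theorem, Unitary.conjStarAlgAut_apply]
    rw [← hUdef, ← Matrix.mulVec_mulVec, ← Matrix.mulVec_mulVec, Matrix.dotProduct_mulVec,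
      ← hyx, ← hy]
    simp only [dotProduct, Matrix.mulVec_diagonal, Function.comp_apply,
      RCLike.ofReal_real_eq_id, id_eq]
    exact Finset.sum_congr rfl fun i _ => by ring
  rw [hform, ← hnorm]
  have : M * (y ⬝ᵥ y) = ∑ i, M * (y i)^2 := by
    rw [dotProduct, Finset.mul_sum]; exact Finset.sum_congr rfl fun i _ => by ring
  rw [this]
  exact Finset.sum_le_sum fun i _ => mul_le_mul_of_nonneg_right (hM i) (sq_nonneg _)

set_option maxHeartbeats 1000000 in
theorem chromatic_lower_bound {n : ℕ} (hn : 0 < n) (G : SimpleGraph (Fin n))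
    [DecidableRel G.Adj] (hδ : 1 ≤ G.minDegree) :
    lapEig G ⟨n - 1, by omega⟩ / (lapEig G ⟨n - 1, by omega⟩ - G.minDegree)
      ≤ (G.chromaticNumber.toNat : ℝ) := by
  classical
  set k := G.chromaticNumber.toNat with hk
  have hCol : G.Colorable k := G.colorable_chromaticNumber_of_fintype
  obtain ⟨C⟩ := hCol
  -- an edge exists
  obtain ⟨v⟩ : Nonempty (Fin n) := ⟨⟨0, hn⟩⟩
  have hdegv : 1 ≤ G.degree v := le_trans hδ (G.minDegree_le_degree v)
  obtain ⟨w, hvw⟩ : ∃ w, G.Adj v w :=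
    (G.degree_pos_iff_exists_adj v).mp (by omega)
  have hk2 : 2 ≤ k := by
    have hne : (C v).val ≠ (C w).val := fun h => C.valid hvw (Fin.ext h)
    have h1 := (C v).isLt
    have h2 := (C w).isLt
    omega
  have hn2 : 2 ≤ n := by
    have hne : v.val ≠ w.val := fun h => hvw.ne (Fin.ext h)
    have h1 := v.isLt; have h2 := w.isLt
    omega
  -- pigeonhole: a big color class
  have hfib : (Finset.univ : Finset (Fin n)).card
      = ∑ c : Fin k, (Finset.univ.filter (fun u => C u = c)).card :=
    Finset.card_eq_sum_card_fiberwise (fun u _ => Finset.mem_univ (C u))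
  obtain ⟨c, -, hc⟩ : ∃ c ∈ (Finset.univ : Finset (Fin k)),
      n ≤ k * (Finset.univ.filter (fun u => C u = c)).card := by
    apply Finset.exists_le_of_sum_le ⟨⟨0, by omega⟩, Finset.mem_univ _⟩
    rw [← Finset.mul_sum, ← hfib]
    simp [Nat.mul_comm]
  set S : Finset (Fin n) := Finset.univ.filter (fun u => C u = c) with hS
  set s : ℕ := S.card with hs
  have hs1 : 1 ≤ s := by
    rcases Nat.eq_zero_or_pos s with h | h
    · rw [h, Nat.mul_zero] at hc; omega
    · exact h
  -- S is independent
  have hind : ∀ i j : Fin n, G.Adj i j → i ∈ S → j ∉ S := by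
    intro i j hij hiS hjS
    rw [hS, Finset.mem_filter] at hiS hjS
    exact C.valid hij (hiS.2.trans hjS.2.symm)
  -- S is a proper subset: s ≤ n - 1
  have hsn : s < n := by
    obtain ⟨v0, hv0⟩ := Finset.card_pos.mp (by omega : 0 < S.card)
    obtain ⟨w0, hvw0⟩ : ∃ w0, G.Adj v0 w0 :=
      (G.degree_pos_iff_exists_adj v0).mp
        (lt_of_lt_of_le Nat.zero_lt_one (le_trans hδ (G.minDegree_le_degree v0)))
    have hw0 : w0 ∉ S := hind v0 w0 hvw0 hv0
    have hSU : S ⊂ Finset.univ := Finset.ssubset_univ_iff.mpr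
      (fun h => hw0 (h ▸ Finset.mem_univ w0))
    have := Finset.card_lt_card hSU
    simpa using this
  -- the test vector
  set x : Fin n → ℝ := fun u => if u ∈ S then ((n : ℝ) - s) else -(s : ℝ) with hx
  have hh : (G.lapMatrix ℝ).IsHermitian := (SimpleGraph.posSemidef_lapMatrix ℝ G).1
  -- quadratic form lower bound
  have hQform : x ⬝ᵥ (G.lapMatrix ℝ *ᵥ x)
      = (∑ i, ∑ j, if G.Adj i j then (x i - x j)^2 else 0) / 2 := by
    rw [← Matrix.toLinearMap₂'_apply', SimpleGraph.lapMatrix_toLinearMap₂']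
  have hterm : ∀ i j : Fin n,
      (n : ℝ)^2 * ((if G.Adj i j ∧ i ∈ S then (1:ℝ) else 0)
        + (if G.Adj i j ∧ j ∈ S then (1:ℝ) else 0))
      ≤ (if G.Adj i j then (x i - x j)^2 else 0) := by
    intro i j
    by_cases hij : G.Adj i j
    · by_cases hiS : i ∈ S
      · have hjS : j ∉ S := hind i j hij hiS
        simp only [hx, hij, hiS, hjS, and_true, and_false, true_and, if_true, if_false,
          if_neg hjS, if_pos hiS]
        ring_nf
        nlinarith [sq_nonneg ((n:ℝ))]
      · by_cases hjS : j ∈ S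
        · simp only [hx, hij, hiS, hjS, true_and, if_true, if_false, if_neg hiS, if_pos hjS]
          ring_nf
          nlinarith [sq_nonneg ((n:ℝ))]
        · simp only [hx, hij, hiS, hjS, true_and, if_false, if_neg hiS, if_neg hjS]
          simp
    · simp [hij]
  have hdegS : ∀ i : Fin n, ∑ j, (if G.Adj i j ∧ i ∈ S then (1:ℝ) else 0)
      = if i ∈ S then (G.degree i : ℝ) else 0 := by
    intro i
    by_cases hiS : i ∈ S
    · simp only [hiS, and_true, if_pos hiS]
      rw [Finset.sum_boole]
      congr 1
      rw [SimpleGraph.degree]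
      congr 1
      ext j
      simp [SimpleGraph.mem_neighborFinset]
    · simp [hiS]
  have hsum1 : ∑ i, ∑ j, (if G.Adj i j ∧ i ∈ S then (1:ℝ) else 0)
      ≥ (s : ℝ) * (G.minDegree : ℝ) := by
    calc ∑ i, ∑ j, (if G.Adj i j ∧ i ∈ S then (1:ℝ) else 0)
        = ∑ i, (if i ∈ S then (G.degree i : ℝ) else 0) :=
          Finset.sum_congr rfl fun i _ => hdegS i
      _ = ∑ i ∈ S, (G.degree i : ℝ) := by rw [Finset.sum_ite_mem, Finset.univ_inter]
      _ ≥ ∑ i ∈ S, (G.minDegree : ℝ) :=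
          Finset.sum_le_sum fun i _ => by exact_mod_cast G.minDegree_le_degree i
      _ = (s : ℝ) * (G.minDegree : ℝ) := by rw [Finset.sum_const, hs]; simp [mul_comm]
  have hsum2 : ∑ i, ∑ j, (if G.Adj i j ∧ j ∈ S then (1:ℝ) else 0)
      ≥ (s : ℝ) * (G.minDegree : ℝ) := by
    rw [Finset.sum_comm]
    calc ∑ j, ∑ i, (if G.Adj i j ∧ j ∈ S then (1:ℝ) else 0)
        = ∑ j, ∑ i, (if G.Adj j i ∧ j ∈ S then (1:ℝ) else 0) := by
          apply Finset.sum_congr rfl; intro j _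
          apply Finset.sum_congr rfl; intro i _
          exact if_congr (and_congr_left' (G.adj_comm i j)) rfl rfl
      _ ≥ (s : ℝ) * (G.minDegree : ℝ) := hsum1
  have hQ : (s : ℝ) * (G.minDegree : ℝ) * (n : ℝ)^2 ≤ x ⬝ᵥ (G.lapMatrix ℝ *ᵥ x) := by
    rw [hQform]
    have h1 : ∑ i, ∑ j, (n : ℝ)^2 * ((if G.Adj i j ∧ i ∈ S then (1:ℝ) else 0)
        + (if G.Adj i j ∧ j ∈ S then (1:ℝ) else 0))
        ≤ ∑ i, ∑ j, (if G.Adj i j then (x i - x j)^2 else 0) :=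
      Finset.sum_le_sum fun i _ => Finset.sum_le_sum fun j _ => hterm i j
    have h2 : ∑ i, ∑ j, (n : ℝ)^2 * ((if G.Adj i j ∧ i ∈ S then (1:ℝ) else 0)
        + (if G.Adj i j ∧ j ∈ S then (1:ℝ) else 0))
        ≥ (n : ℝ)^2 * (2 * ((s : ℝ) * (G.minDegree : ℝ))) := by
      have e : ∑ i, ∑ j, (n : ℝ)^2 * ((if G.Adj i j ∧ i ∈ S then (1:ℝ) else 0)
          + (if G.Adj i j ∧ j ∈ S then (1:ℝ) else 0))
          = (n : ℝ)^2 * ((∑ i, ∑ j, (if G.Adj i j ∧ i ∈ S then (1:ℝ) else 0))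
            + (∑ i, ∑ j, (if G.Adj i j ∧ j ∈ S then (1:ℝ) else 0))) := by
        simp_rw [← Finset.mul_sum, Finset.sum_add_distrib]
      rw [ge_iff_le, e]
      have hadd := add_le_add hsum1 hsum2
      nlinarith [sq_nonneg ((n:ℝ))]
    linarith
  -- norm of the test vector
  have hN : x ⬝ᵥ x = (s:ℝ) * ((n:ℝ) - s) * (n:ℝ) := by
    have hxu : ∀ u, x u * x u = if u ∈ S then ((n:ℝ)-s)^2 else (s:ℝ)^2 := by
      intro u; by_cases hu : u ∈ S <;> simp [hx, hu] <;> ring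
    have hcompl : (Finset.univ.filter (fun u => u ∉ S)).card = n - s := by
      rw [Finset.filter_not, Finset.filter_mem_eq_inter, Finset.univ_inter,
        Finset.card_sdiff_of_subset (Finset.subset_univ S)]
      simp [hs]
    calc x ⬝ᵥ x = ∑ u, (if u ∈ S then ((n:ℝ)-s)^2 else (s:ℝ)^2) :=
          Finset.sum_congr rfl fun u _ => hxu u
      _ = (s:ℝ)*((n:ℝ)-s)^2 + ((n:ℝ)-s)*(s:ℝ)^2 := by
          rw [Finset.sum_ite, Finset.sum_const, Finset.sum_const,
            Finset.filter_mem_eq_inter, Finset.univ_inter, hcompl, ← hs]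
          have : ((n - s : ℕ) : ℝ) = (n:ℝ) - s := by
            push_cast [Nat.cast_sub hsn.le]; ring
          rw [nsmul_eq_mul, nsmul_eq_mul, this]
      _ = (s:ℝ) * ((n:ℝ) - s) * (n:ℝ) := by ring
  -- the largest eigenvalue
  set lam : ℝ := lapEig G ⟨n - 1, by omega⟩ with hlam
  have hunfold : lapEig G = hh.eigenvalues ∘ Tuple.sort hh.eigenvalues := rfl
  have hmax : ∀ i, hh.eigenvalues i ≤ lam := by
    intro i
    have hmono : Monotone (hh.eigenvalues ∘ Tuple.sort hh.eigenvalues) :=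
      Tuple.monotone_sort _
    have hi : hh.eigenvalues i
        = (hh.eigenvalues ∘ Tuple.sort hh.eigenvalues)
          ((Tuple.sort hh.eigenvalues).symm i) := by simp
    rw [hi, hlam, hunfold]
    apply hmono
    have hlt := ((Tuple.sort hh.eigenvalues).symm i).isLt
    exact Fin.le_def.mpr (by simp only []; omega)
  have hR := rayleigh_max hh hmax x
  -- put everything together
  have hns : (0:ℝ) < (n:ℝ) - s := by
    have : (s:ℝ) < (n:ℝ) := by exact_mod_cast hsn
    linarith
  have hspos : (0:ℝ) < (s:ℝ) := by exact_mod_cast hs1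
  have hnpos : (0:ℝ) < (n:ℝ) := by positivity
  have hδpos : (1:ℝ) ≤ (G.minDegree:ℝ) := by exact_mod_cast hδ
  have key : (G.minDegree:ℝ) * n ≤ lam * ((n:ℝ) - s) := by
    rw [hN] at hR
    nlinarith [hQ.trans hR, mul_pos hspos hnpos]
  have hlamδ : (G.minDegree:ℝ) < lam := by nlinarith [key]
  have hc' : (n:ℝ) ≤ (k:ℝ) * s := by exact_mod_cast hc
  have hk2' : (2:ℝ) ≤ (k:ℝ) := by exact_mod_cast hk2
  show lam / (lam - (G.minDegree:ℝ)) ≤ (k:ℝ)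
  rw [div_le_iff₀ (by linarith : (0:ℝ) < lam - (G.minDegree:ℝ))]
  nlinarith [key, hc', mul_le_mul_of_nonneg_left hc' (by linarith : (0:ℝ) ≤ (G.minDegree:ℝ)),
    mul_le_mul_of_nonneg_left key (by linarith : (0:ℝ) ≤ (k:ℝ) - 1)]
end
end

section
/- Let G = K_{s,s,…,s} be the complete r-partite graph with r parts each of size s (r ≥ 2, s ≥ 1). Then χ(G) = r, δ(G) = (r−1)s, the largest Laplacian eigenvalue is σ_{n−1} = rs, and equality χ(G) = σ_{n−1}/(σ_{n−1} − δ) holds. -/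
open Finset

noncomputable section
open Matrix


/-- The complete `r`-partite graph with parts of size `s`: vertices `i, j` are adjacent
iff they lie in different blocks of size `s`. -/
def completeMultipartite (r s : ℕ) : SimpleGraph (Fin (r * s)) where
  Adj a b := (a : ℕ) / s ≠ (b : ℕ) / s
  symm := ⟨fun _ _ h => h.symm⟩
  loopless := ⟨fun _ h => h rfl⟩

instance (r s : ℕ) : DecidableRel (completeMultipartite r s).Adj :=
  fun a b => inferInstanceAs (Decidable ((a : ℕ) / s ≠ (b : ℕ) / s))


lemma sum_div_blocks {M : Type*} [AddCommMonoid M] (r s : ℕ) (hs : 0 < s) (f : ℕ → M) :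
    ∑ b : Fin (r * s), f ((b : ℕ) / s) = ∑ k ∈ Finset.range r, s • f k := by
  rw [← Fintype.sum_equiv finProdFinEquiv (fun p : Fin r × Fin s => f p.1)
      (fun b => f ((b : ℕ) / s)) ?_]
  · rw [Fintype.sum_prod_type]
    simp only [Finset.sum_const, Finset.card_univ, Fintype.card_fin]
    exact Fin.sum_univ_eq_sum_range (fun k => s • f k) r
  · intro p
    simp only [finProdFinEquiv_apply_val]
    rw [Nat.add_mul_div_left _ _ hs, Nat.div_eq_of_lt p.2.2, Nat.zero_add]

lemma quad_le {n : ℕ} (G : SimpleGraph (Fin n)) [DecidableRel G.Adj] (x : Fin n → ℝ) :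
    dotProduct x (G.lapMatrix ℝ *ᵥ x) ≤ n * dotProduct x x := by
  have h := G.lapMatrix_toLinearMap₂' (R := ℝ) x
  rw [Matrix.toLinearMap₂'_apply'] at h
  rw [h]
  have key : (∑ i : Fin n, ∑ j : Fin n, if G.Adj i j then (x i - x j)^2 else 0)
      ≤ ∑ i : Fin n, ∑ j : Fin n, (x i - x j)^2 := by
    refine Finset.sum_le_sum fun i _ => Finset.sum_le_sum fun j _ => ?_
    split
    · exact le_rfl
    · positivity
  have expand : (∑ i : Fin n, ∑ j : Fin n, (x i - x j)^2)
      = 2 * (n * ∑ i, x i ^ 2) - 2 * (∑ i, x i)^2 := by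
    have : ∀ i j : Fin n, (x i - x j)^2 = x i ^2 + x j^2 - 2*(x i * x j) := fun i j => by ring
    simp only [this, Finset.sum_add_distrib, Finset.sum_sub_distrib, Finset.sum_const,
      Finset.card_univ, Fintype.card_fin, nsmul_eq_mul, ← Finset.mul_sum, ← Finset.sum_mul]
    ring
  have hdp : dotProduct x x = ∑ i, x i ^ 2 := by
    simp [dotProduct, sq]
  rw [hdp]
  have h2 : (∑ i : Fin n, ∑ j : Fin n, (x i - x j)^2) ≤ 2 * (n * ∑ i, x i ^ 2) := by
    rw [expand]; nlinarith [sq_nonneg (∑ i, x i)]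
  linarith


lemma div_lt_r {r s : ℕ} (hs : 0 < s) (a : Fin (r * s)) : (a : ℕ) / s < r :=
  (Nat.div_lt_iff_lt_mul hs).mpr a.2

lemma cm_degree {r s : ℕ} (hs : 0 < s) (a : Fin (r * s)) :
    (completeMultipartite r s).degree a = (r - 1) * s := by
  classical
  rw [← SimpleGraph.card_neighborFinset_eq_degree, SimpleGraph.neighborFinset_eq_filter,
    Finset.card_filter]
  have : ∀ b : Fin (r*s), (if (completeMultipartite r s).Adj a b then (1:ℕ) else 0)
      = (fun k => if k ≠ (a:ℕ)/s then (1:ℕ) else 0) ((b:ℕ)/s) := by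
    intro b
    simp only [completeMultipartite, ne_comm]
    exact if_congr Iff.rfl rfl rfl
  simp_rw [this]
  have key := sum_div_blocks r s hs (fun k => if k ≠ (a:ℕ)/s then (1:ℕ) else 0)
  rw [key]
  have hm : (a:ℕ)/s ∈ Finset.range r := Finset.mem_range.mpr (div_lt_r hs a)
  simp only [smul_ite, smul_zero]
  rw [← Finset.sum_filter, Finset.filter_ne', Finset.sum_const,
    Finset.card_erase_of_mem hm, Finset.card_range]
  simp [mul_comm]

noncomputable def wfun : ℕ → ℝ := fun k => if k = 0 then 1 else if k = 1 then -1 else 0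

lemma wfun_sum {r : ℕ} (hr : 2 ≤ r) : ∑ k ∈ Finset.range r, wfun k = 0 := by
  have h : ∑ k ∈ Finset.range r, wfun k = ∑ k ∈ Finset.range 2, wfun k := by
    refine (Finset.sum_subset (Finset.range_subset_range.mpr hr) fun k _ hk => ?_).symm
    have : k ≠ 0 ∧ k ≠ 1 := by simp only [Finset.mem_range] at hk; omega
    simp [wfun, this.1, this.2]
  rw [h]
  simp [Finset.sum_range_succ, wfun]

lemma cm_mulVec {r s : ℕ} (hr : 2 ≤ r) (hs : 0 < s) :
    (completeMultipartite r s).lapMatrix ℝ *ᵥ (fun a : Fin (r*s) => wfun ((a : ℕ)/s))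
      = ((r : ℝ) * s) • (fun a : Fin (r*s) => wfun ((a : ℕ)/s)) := by
  funext a
  rw [SimpleGraph.lapMatrix_mulVec_apply]
  have hdeg := cm_degree hs a
  have hnbr : ∑ u ∈ (completeMultipartite r s).neighborFinset a, wfun ((u:ℕ)/s)
      = -(s * wfun ((a:ℕ)/s)) := by
    rw [SimpleGraph.neighborFinset_eq_filter, Finset.sum_filter]
    have : ∀ b : Fin (r*s), (if (completeMultipartite r s).Adj a b then wfun ((b:ℕ)/s) else 0)
        = (fun k => if k ≠ (a:ℕ)/s then wfun k else 0) ((b:ℕ)/s) := by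
      intro b
      simp only [completeMultipartite, ne_comm]
      exact if_congr Iff.rfl rfl rfl
    simp_rw [this]
    have key := sum_div_blocks r s hs (fun k => if k ≠ (a:ℕ)/s then wfun k else 0)
    rw [key]
    have hm : (a:ℕ)/s ∈ Finset.range r := Finset.mem_range.mpr (div_lt_r hs a)
    simp only [smul_ite, smul_zero]
    rw [← Finset.sum_filter, Finset.filter_ne', Finset.sum_erase_eq_sub hm]
    simp only [nsmul_eq_mul]
    rw [← Finset.mul_sum, wfun_sum hr]
    ring
  rw [hdeg, hnbr]
  simp only [Pi.smul_apply, smul_eq_mul]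
  have hr1 : (1:ℕ) ≤ r := by omega
  push_cast [Nat.cast_sub hr1]
  ring

lemma eig_le {n : ℕ} (G : SimpleGraph (Fin n)) [DecidableRel G.Adj] (i : Fin n) :
    ((SimpleGraph.posSemidef_lapMatrix ℝ G).1).eigenvalues i ≤ n := by
  have hA := (SimpleGraph.posSemidef_lapMatrix ℝ G).1
  have hmv := hA.mulVec_eigenvectorBasis i
  have hq := quad_le G ⇑(hA.eigenvectorBasis i)
  rw [hmv, dotProduct_smul] at hq
  have hx : dotProduct (⇑(hA.eigenvectorBasis i)) (⇑(hA.eigenvectorBasis i)) = 1 := by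
    have h1 : (inner ℝ (hA.eigenvectorBasis i) (hA.eigenvectorBasis i) : ℝ) = 1 := by
      have hn := hA.eigenvectorBasis.orthonormal.1 i
      rw [real_inner_self_eq_norm_sq, hn]
      norm_num
    rw [← h1]
    simp [dotProduct, PiLp.inner_apply, RCLike.inner_apply, mul_comm]
    rw [← h1, PiLp.inner_apply]
    simp [sq]
  rw [hx] at hq
  simpa using hq

lemma cm_exists_eig {r s : ℕ} (hr : 2 ≤ r) (hs : 0 < s) :
    ∃ i, ((SimpleGraph.posSemidef_lapMatrix ℝ (completeMultipartite r s)).1).eigenvalues i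
      = (r : ℝ) * s := by
  set L := (completeMultipartite r s).lapMatrix ℝ with hL
  set hA := (SimpleGraph.posSemidef_lapMatrix ℝ (completeMultipartite r s)).1 with hAdef
  have hspec : ((r:ℝ)*s) ∈ spectrum ℝ L := by
    rw [spectrum.mem_iff]
    intro hu
    set v : Fin (r*s) → ℝ := fun a : Fin (r*s) => wfun ((a : ℕ)/s) with hv
    have hv0 : (algebraMap ℝ (Matrix (Fin (r*s)) (Fin (r*s)) ℝ) ((r:ℝ)*s) - L) *ᵥ v = 0 := by
      rw [Matrix.sub_mulVec, Algebra.algebraMap_eq_smul_one, Matrix.smul_mulVec,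
        Matrix.one_mulVec, cm_mulVec hr hs, sub_self]
    obtain ⟨u, hu⟩ := hu
    have hvz : v = 0 := by
      have h1 : ((u⁻¹ : (Matrix (Fin (r*s)) (Fin (r*s)) ℝ)ˣ) : Matrix (Fin (r*s)) (Fin (r*s)) ℝ)
          *ᵥ ((u : Matrix (Fin (r*s)) (Fin (r*s)) ℝ) *ᵥ v) = v := by
        rw [Matrix.mulVec_mulVec, Units.inv_mul, Matrix.one_mulVec]
      rw [hu, hv0, Matrix.mulVec_zero] at h1
      exact h1.symm
    have : v ⟨0, Nat.mul_pos (by omega) hs⟩ = 1 := by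
      simp [hv, wfun, Nat.zero_div]
    rw [hvz] at this
    simp at this
  rw [Matrix.IsHermitian.spectrum_real_eq_range_eigenvalues hA] at hspec
  exact hspec

theorem completeMultipartite_chromatic_equality {r s : ℕ} (hr : 2 ≤ r) (hs : 1 ≤ s) :
    (completeMultipartite r s).chromaticNumber = r ∧
    (completeMultipartite r s).minDegree = (r - 1) * s ∧
    lapEig (completeMultipartite r s)
        ⟨r * s - 1, Nat.sub_lt (Nat.mul_pos (by omega) (by omega)) one_pos⟩ = (r : ℝ) * s ∧
    (r : ℝ) = ((r : ℝ) * s) / ((r : ℝ) * s - ((r : ℝ) - 1) * s) := by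
  have hs0 : 0 < s := hs
  have hn : 0 < r * s := Nat.mul_pos (by omega) hs0
  refine ⟨?_, ?_, ?_, ?_⟩
  · apply le_antisymm
    · have C : (completeMultipartite r s).Coloring (Fin r) :=
        SimpleGraph.Coloring.mk (fun a => ⟨(a:ℕ)/s, div_lt_r hs0 a⟩)
          (fun {a b} hab => by simpa [Fin.ext_iff, completeMultipartite] using hab)
      simpa using (SimpleGraph.Colorable.chromaticNumber_le ⟨C⟩)
    · have f : (⊤ : SimpleGraph (Fin r)) ↪g completeMultipartite r s :=
        { toFun := fun k => ⟨(k:ℕ)*s, (Nat.mul_lt_mul_right hs0).mpr k.2⟩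
          inj' := fun k l h => by
            apply Fin.ext
            have h2 := congrArg Fin.val h
            simp only at h2
            exact Nat.eq_of_mul_eq_mul_right hs0 h2
          map_rel_iff' := by
            intro k l
            change (k:ℕ)*s/s ≠ (l:ℕ)*s/s ↔ (⊤ : SimpleGraph (Fin r)).Adj k l
            simp [completeMultipartite, Nat.mul_div_cancel _ hs0, Fin.ext_iff] }
      have hf := SimpleGraph.chromaticNumber_mono_of_hom f.toHom
      rwa [SimpleGraph.chromaticNumber_top, Fintype.card_fin] at hf
  · haveI : Nonempty (Fin (r*s)) := ⟨⟨0, hn⟩⟩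
    apply le_antisymm
    · rw [← cm_degree hs0 ⟨0, hn⟩]
      exact SimpleGraph.minDegree_le_degree _ _
    · exact SimpleGraph.le_minDegree_of_forall_le_degree _ _ (fun v => (cm_degree hs0 v).ge)
  · set G := completeMultipartite r s with hG
    set hA := (SimpleGraph.posSemidef_lapMatrix ℝ G).1 with hAdef
    set σ := Tuple.sort hA.eigenvalues with hσ
    have hmono : Monotone (hA.eigenvalues ∘ σ) := Tuple.monotone_sort hA.eigenvalues
    obtain ⟨i, hi⟩ := cm_exists_eig hr hs0
    have hub : ∀ j : Fin (r*s), (hA.eigenvalues ∘ σ) j ≤ (r:ℝ)*s := by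
      intro j
      have h := eig_le G (σ j)
      calc (hA.eigenvalues ∘ σ) j ≤ ((r*s : ℕ) : ℝ) := h
        _ = (r:ℝ)*s := by push_cast; ring
    have hex : (hA.eigenvalues ∘ σ) (σ.symm i) = (r:ℝ)*s := by
      simp only [Function.comp_apply, Equiv.apply_symm_apply]
      exact hi
    have heq : lapEig G ⟨r * s - 1, Nat.sub_lt (Nat.mul_pos (by omega) (by omega)) one_pos⟩
        = (hA.eigenvalues ∘ σ) ⟨r * s - 1, Nat.sub_lt (Nat.mul_pos (by omega) (by omega)) one_pos⟩ := rfl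
    rw [heq]
    refine le_antisymm (hub _) ?_
    rw [← hex]
    apply hmono
    rw [Fin.le_def]
    have := (σ.symm i).isLt
    simp only
    omega
  · have hsne : (s:ℝ) ≠ 0 := Nat.cast_ne_zero.mpr (by omega)
    rw [show (r:ℝ)*s - ((r:ℝ)-1)*s = s by ring, mul_div_assoc, div_self hsne, mul_one]
end
end

section
/- Let G be a graph on n vertices with average degree d. If every nonzero Laplacian eigenvalue σ_i satisfies |d − σ_i| ≤ θ with θ < d, then the vertex expanding factor satisfies γ(G) ≥ (d² − θ²)/(nθ²). -/
open Finset
open Matrix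

noncomputable section

/-- The neighbourhood of a vertex set `X`: vertices outside `X` adjacent to some vertex of `X`. -/
def nbr {n : ℕ} (G : SimpleGraph (Fin n)) [DecidableRel G.Adj]
    (X : Finset (Fin n)) : Finset (Fin n) :=
  Finset.univ.filter (fun y => y ∉ X ∧ ∃ x ∈ X, G.Adj x y)

/-- `X⁺`, the complement of `X ∪ N(X)`. -/
def plusSet {n : ℕ} (G : SimpleGraph (Fin n)) [DecidableRel G.Adj]
    (X : Finset (Fin n)) : Finset (Fin n) :=
  Finset.univ \ (X ∪ nbr G X)

set_option maxHeartbeats 1000000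

theorem expanding_factor_lower_bound {n : ℕ} (G : SimpleGraph (Fin n))
    [DecidableRel G.Adj] (θ : ℝ) (hθd : θ < avgDeg G)
    (hθ : ∀ i : Fin n, 0 < (i : ℕ) →
    |avgDeg G - lapEig G i| ≤ θ) :
    ∀ X : Finset (Fin n), 1 ≤ X.card → X.card ≤ n - 1 → 1 ≤ (plusSet G X).card →
      (avgDeg G ^ 2 - θ ^ 2) / (n * θ ^ 2)
        ≤ ((nbr G X).card : ℝ) / (X.card * (plusSet G X).card) := by
  intro X hX1 hXn hP1
  classical
  set d := avgDeg G with hd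
  set P := plusSet G X with hP
  -- cardinalities
  have hdisj : Disjoint X (nbr G X) := by
    rw [Finset.disjoint_right]
    intro y hy
    simp only [nbr, Finset.mem_filter] at hy
    exact hy.2.1
  have hcard : X.card + (nbr G X).card + P.card = n := by
    have h1 : (X ∪ nbr G X).card = X.card + (nbr G X).card :=
      Finset.card_union_of_disjoint hdisj
    have h2 : P.card = n - (X ∪ nbr G X).card := by
      rw [hP, plusSet, Finset.card_sdiff_of_subset (Finset.subset_univ _), Finset.card_univ,
        Fintype.card_fin]
    have h3 : (X ∪ nbr G X).card ≤ n := by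
      simpa using Finset.card_le_univ (X ∪ nbr G X)
    omega
  have hn2 : 2 ≤ n := by omega
  have hθ0 : 0 ≤ θ := le_trans (abs_nonneg _) (hθ ⟨1, by omega⟩ (by simp))
  -- real abbreviations
  set rx : ℝ := (X.card : ℝ) with hrx
  set rN : ℝ := ((nbr G X).card : ℝ) with hrN
  set rp : ℝ := (P.card : ℝ) with hrp
  set rn : ℝ := (n : ℝ) with hrn
  have hrx1 : 1 ≤ rx := by rw [hrx]; exact_mod_cast hX1
  have hrp1 : 1 ≤ rp := by rw [hrp]; exact_mod_cast hP1
  have hrN0 : 0 ≤ rN := by positivity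
  have hsum : rx + rN + rp = rn := by
    rw [hrx, hrN, hrp, hrn]
    exact_mod_cast hcard
  have hrnpos : (0:ℝ) < rn := by rw [hrn]; positivity
  rcases eq_or_lt_of_le hθ0 with hθz | hθpos
  · -- θ = 0 : LHS is division by zero, hence 0
    rw [← hθz]
    norm_num
    positivity
  -- main case θ > 0
  set L := G.lapMatrix ℝ with hLdef
  have hL : L.IsHermitian := (SimpleGraph.posSemidef_lapMatrix ℝ G).1
  set μ := hL.eigenvalues with hμ
  set B := hL.eigenvectorBasis with hB
  have heig : ∀ i, L *ᵥ (B i) = μ i • (B i) := hL.mulVec_eigenvectorBasis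
  have hinner : ∀ x y : EuclideanSpace ℝ (Fin n), (inner ℝ x y : ℝ) = ∑ i, x i * y i := by
    intro x y
    simp [PiLp.inner_apply, RCLike.inner_apply, mul_comm]
  have hsym : ∀ x y : Fin n → ℝ, x ⬝ᵥ (L *ᵥ y) = (L *ᵥ x) ⬝ᵥ y := by
    intro x y
    rw [Matrix.dotProduct_mulVec, ← Matrix.mulVec_transpose,
      (SimpleGraph.isSymm_lapMatrix (R := ℝ) (G := G)).eq]
  have hLone : L *ᵥ (fun _ => (1:ℝ)) = 0 := G.lapMatrix_mulVec_const_eq_zero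
  set one : EuclideanSpace ℝ (Fin n) := WithLp.toLp 2 (fun _ => (1:ℝ)) with hone
  have hms : ∀ (f : Fin n → (Fin n → ℝ)), L *ᵥ (∑ i, f i) = ∑ i, L *ᵥ (f i) := by
    intro f
    show L.mulVecLin (∑ i, f i) = ∑ i, L.mulVecLin (f i)
    exact map_sum _ _ _
  -- eigenvectors with nonzero eigenvalue are orthogonal to the all-ones vector
  have horth : ∀ i, μ i ≠ 0 → (inner ℝ (B i) one : ℝ) = 0 := by
    intro i hi
    have h1 : (inner ℝ (B i) one : ℝ) = (B i : Fin n → ℝ) ⬝ᵥ (one : Fin n → ℝ) := by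
      rw [hinner]; rfl
    have h2 : ((L *ᵥ (B i : Fin n → ℝ)) : Fin n → ℝ) ⬝ᵥ (one : Fin n → ℝ)
        = μ i * ((B i : Fin n → ℝ) ⬝ᵥ (one : Fin n → ℝ)) := by
      rw [heig i, smul_dotProduct]; rfl
    rw [← hsym, hLone, dotProduct_zero] at h2
    rcases mul_eq_zero.mp h2.symm with h | h
    · exact absurd h hi
    · rw [h1, h]
  -- spectral expansion of the quadratic form
  have hexp : ∀ v : EuclideanSpace ℝ (Fin n),
      WithLp.toLp 2 (L *ᵥ (v : Fin n → ℝ))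
        = (∑ i, ((μ i * (inner ℝ (B i) v : ℝ)) • B i : EuclideanSpace ℝ (Fin n)) : EuclideanSpace ℝ (Fin n)) := by
    intro v
    conv_lhs => rw [← B.sum_repr' v]
    rw [WithLp.ofLp_sum, hms, WithLp.toLp_sum]
    refine Finset.sum_congr rfl (fun i _ => ?_)
    rw [WithLp.ofLp_smul, Matrix.mulVec_smul, heig i, smul_smul, WithLp.toLp_smul, WithLp.toLp_ofLp, mul_comm]
  have hquad : ∀ u v : EuclideanSpace ℝ (Fin n),
      (inner ℝ u (WithLp.toLp 2 (L *ᵥ (v : Fin n → ℝ))) : ℝ)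
        = ∑ i, μ i * ((inner ℝ (B i) u : ℝ) * (inner ℝ (B i) v : ℝ)) := by
    intro u v
    rw [hexp v, inner_sum]
    refine Finset.sum_congr rfl (fun i _ => ?_)
    rw [real_inner_smul_right, real_inner_comm u (B i)]
    ring
  have hparseval : ∀ u v : EuclideanSpace ℝ (Fin n),
      (inner ℝ u v : ℝ) = ∑ i, (inner ℝ (B i) u : ℝ) * (inner ℝ (B i) v : ℝ) := by
    intro u v
    rw [← B.sum_inner_mul_inner u v]
    refine Finset.sum_congr rfl (fun i _ => ?_)
    rw [real_inner_comm u (B i)]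
  -- all eigenvalues except possibly the one at sorted position 0 are close to d
  haveI : NeZero n := ⟨by omega⟩
  have hgood : ∀ i : Fin n, i ≠ Tuple.sort μ 0 → |d - μ i| ≤ θ := by
    intro i hi
    set j := (Tuple.sort μ).symm i with hj
    have hij : Tuple.sort μ j = i := Equiv.apply_symm_apply _ _
    have hj0 : j ≠ 0 := by
      intro h
      rw [h] at hij
      exact hi hij.symm
    have hjpos : 0 < (j : ℕ) := by
      rcases Nat.eq_zero_or_pos (j : ℕ) with h | h
      · exact absurd (Fin.ext (by simp [h]) : j = 0) hj0
      · exact h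
    have := hθ j hjpos
    have hle : lapEig G j = μ (Tuple.sort μ j) := rfl
    rw [hle, hij] at this
    exact this
  -- if the eigenvalue bound fails at i, the eigenvector is parallel to ones,
  -- hence orthogonal coefficients vanish
  have hcoeff : ∀ i : Fin n, ¬ (|d - μ i| ≤ θ) → ∀ u : EuclideanSpace ℝ (Fin n),
      (inner ℝ one u : ℝ) = 0 → (inner ℝ (B i) u : ℝ) = 0 := by
    intro i hbad u hu
    have honei : ∀ k, k ≠ i → (inner ℝ (B k) one : ℝ) = 0 := by
      intro k hk
      have hkgood : |d - μ k| ≤ θ := by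
        refine hgood k ?_
        intro h
        have : i = Tuple.sort μ 0 := by
          by_contra hi
          exact hbad (hgood i hi)
        rw [← this] at h
        exact hk h
      have : μ k ≠ 0 := by
        intro h
        rw [h, sub_zero] at hkgood
        have := le_abs_self d
        linarith
      exact horth k this
    have hrepr : one = (inner ℝ (B i) one : ℝ) • B i := by
      conv_lhs => rw [← B.sum_repr' one]
      rw [Finset.sum_eq_single i]
      · intro k _ hk
        rw [honei k hk, zero_smul]
      · intro h
        exact absurd (Finset.mem_univ i) h
    have h2 : (inner ℝ one u : ℝ) = (inner ℝ (B i) one : ℝ) * (inner ℝ (B i) u : ℝ) := by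
      conv_lhs => rw [hrepr]
      rw [real_inner_smul_left]
    have h3 : (inner ℝ (B i) one : ℝ) ≠ 0 := by
      intro h
      have : (inner ℝ one one : ℝ) = 0 := by
        conv_lhs => rw [hrepr, h, zero_smul, inner_zero_left]
      rw [hinner] at this
      simp only [hone] at this
      rw [Finset.sum_congr rfl (fun k _ => one_mul 1)] at this
      simp at this
      omega
    rw [hu] at h2
    rcases mul_eq_zero.mp h2.symm with h | h
    · exact absurd h h3
    · exact h
  -- indicator-based vectors
  have hind : ∀ (A : Finset (Fin n)), ∑ i, (if i ∈ A then (1:ℝ) else 0) = (A.card : ℝ) := by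
    intro A
    rw [Finset.sum_ite_mem, Finset.univ_inter, Finset.sum_const, nsmul_eq_mul, mul_one]
  have hrnne : rn ≠ 0 := ne_of_gt hrnpos
  have hipgen : ∀ S T : Finset (Fin n),
      (∑ i, (((if i ∈ S then (1:ℝ) else 0) - (S.card:ℝ)/rn)
        * ((if i ∈ T then (1:ℝ) else 0) - (T.card:ℝ)/rn)))
        = ((S ∩ T).card : ℝ) - (S.card:ℝ) * (T.card:ℝ) / rn := by
    intro S T
    have hindST : ∑ i, (if i ∈ S then (1:ℝ) else 0) * (if i ∈ T then 1 else 0)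
        = ((S ∩ T).card : ℝ) := by
      rw [← hind (S ∩ T)]
      refine Finset.sum_congr rfl fun i _ => ?_
      by_cases hS : i ∈ S <;> by_cases hT : i ∈ T <;> simp [hS, hT]
    have expand : ∀ i : Fin n,
        (((if i ∈ S then (1:ℝ) else 0) - (S.card:ℝ)/rn)
          * ((if i ∈ T then (1:ℝ) else 0) - (T.card:ℝ)/rn))
        = (if i ∈ S then (1:ℝ) else 0) * (if i ∈ T then 1 else 0)
          - ((T.card:ℝ)/rn) * (if i ∈ S then (1:ℝ) else 0)
          - ((S.card:ℝ)/rn) * (if i ∈ T then (1:ℝ) else 0)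
          + ((S.card:ℝ)/rn) * ((T.card:ℝ)/rn) := by
      intro i; ring
    rw [Finset.sum_congr rfl fun i _ => expand i]
    rw [Finset.sum_add_distrib, Finset.sum_sub_distrib, Finset.sum_sub_distrib,
      ← Finset.mul_sum, ← Finset.mul_sum, hind S, hind T, hindST, Finset.sum_const,
      Finset.card_univ, Fintype.card_fin, nsmul_eq_mul]
    have : (n : ℝ) = rn := by rw [hrn]
    rw [this]
    field_simp
    ring
  set u : EuclideanSpace ℝ (Fin n) := WithLp.toLp 2 fun i => (if i ∈ X then (1:ℝ) else 0) - rx/rn with hu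
  set v : EuclideanSpace ℝ (Fin n) := WithLp.toLp 2 fun i => (if i ∈ P then (1:ℝ) else 0) - rp/rn with hv
  have hone_u : ∀ w : EuclideanSpace ℝ (Fin n), (inner ℝ one w : ℝ) = ∑ i, w i := by
    intro w
    rw [hinner]
    exact Finset.sum_congr rfl fun i _ => one_mul _
  have hu0 : (inner ℝ one u : ℝ) = 0 := by
    rw [hone_u u]
    have : ∑ i, u i = (∑ i, (if i ∈ X then (1:ℝ) else 0)) - ∑ _i : Fin n, rx/rn :=
      Finset.sum_sub_distrib (f := fun i => if i ∈ X then (1:ℝ) else 0) (g := fun _ => rx/rn)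
    rw [this, hind X, Finset.sum_const, Finset.card_univ, Fintype.card_fin, nsmul_eq_mul,
      ← hrx, ← hrn]
    field_simp
    ring
  have hv0 : (inner ℝ one v : ℝ) = 0 := by
    rw [hone_u v]
    have : ∑ i, v i = (∑ i, (if i ∈ P then (1:ℝ) else 0)) - ∑ _i : Fin n, rp/rn :=
      Finset.sum_sub_distrib (f := fun i => if i ∈ P then (1:ℝ) else 0) (g := fun _ => rp/rn)
    rw [this, hind P, Finset.sum_const, Finset.card_univ, Fintype.card_fin, nsmul_eq_mul,
      ← hrp, ← hrn]
    field_simp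
    ring
  have hXP : X ∩ P = ∅ := by
    rw [hP, plusSet]
    ext a
    simp only [Finset.mem_inter, Finset.mem_sdiff, Finset.mem_univ, Finset.mem_union,
      Finset.notMem_empty, iff_false]
    rintro ⟨ha, -, hb⟩
    exact hb (Or.inl ha)
  have huv : (inner ℝ u v : ℝ) = -(rx * rp) / rn := by
    rw [hinner]
    have h := hipgen X P
    rw [hXP] at h
    simp only [Finset.card_empty, Nat.cast_zero, zero_sub] at h
    rw [← hrx, ← hrp] at h
    calc ∑ i, u i * v i
        = ∑ i, ((if i ∈ X then (1:ℝ) else 0) - rx/rn)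
            * ((if i ∈ P then (1:ℝ) else 0) - rp/rn) := rfl
      _ = -(rx * rp) / rn := by rw [h]; ring
  have huu : (inner ℝ u u : ℝ) = rx - rx * rx / rn := by
    rw [hinner]
    have h := hipgen X X
    rw [Finset.inter_self, ← hrx] at h
    calc ∑ i, u i * u i
        = ∑ i, ((if i ∈ X then (1:ℝ) else 0) - rx/rn)
            * ((if i ∈ X then (1:ℝ) else 0) - rx/rn) := rfl
      _ = rx - rx * rx / rn := by rw [h]
  have hvv : (inner ℝ v v : ℝ) = rp - rp * rp / rn := by
    rw [hinner]
    have h := hipgen P P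
    rw [Finset.inter_self, ← hrp] at h
    calc ∑ i, v i * v i
        = ∑ i, ((if i ∈ P then (1:ℝ) else 0) - rp/rn)
            * ((if i ∈ P then (1:ℝ) else 0) - rp/rn) := rfl
      _ = rp - rp * rp / rn := by rw [h]
  -- no edges between X and P, so the Laplacian form vanishes
  have hL0 : ∀ i ∈ X, ∀ j ∈ P, L i j = 0 := by
    intro i hi j hj
    have hjP : j ∉ X ∧ j ∉ nbr G X := by
      rw [hP, plusSet] at hj
      simp only [Finset.mem_sdiff, Finset.mem_univ, Finset.mem_union, true_and] at hj
      exact ⟨fun h => hj (Or.inl h), fun h => hj (Or.inr h)⟩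
    have hne : i ≠ j := fun h => hjP.1 (h ▸ hi)
    have hnadj : ¬ G.Adj i j := by
      intro hadj
      exact hjP.2 (by
        simp only [nbr, Finset.mem_filter, Finset.mem_univ, true_and]
        exact ⟨hjP.1, ⟨i, hi, hadj⟩⟩)
    rw [hLdef]
    simp [SimpleGraph.lapMatrix, SimpleGraph.degMatrix, Matrix.sub_apply,
      Matrix.diagonal_apply_ne _ hne, SimpleGraph.adjMatrix_apply, hnadj]
  set chiP : Fin n → ℝ := fun i => if i ∈ P then (1:ℝ) else 0 with hchiP
  set chiX : Fin n → ℝ := fun i => if i ∈ X then (1:ℝ) else 0 with hchiX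
  have hLone' : L *ᵥ (fun _ => (1:ℝ)) = 0 := hLone
  have hvdec : (v : Fin n → ℝ) = chiP - (rp/rn) • (fun _ => (1:ℝ)) := by
    funext i
    show v i = chiP i - (rp/rn) * 1
    rw [mul_one]
  have hudec : (u : Fin n → ℝ) = chiX - (rx/rn) • (fun _ => (1:ℝ)) := by
    funext i
    show u i = chiX i - (rx/rn) * 1
    rw [mul_one]
  have hLv : (L *ᵥ (v : Fin n → ℝ)) = L *ᵥ chiP := by
    rw [hvdec, Matrix.mulVec_sub, Matrix.mulVec_smul, hLone', smul_zero, sub_zero]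
  have hXLP : chiX ⬝ᵥ (L *ᵥ chiP) = 0 := by
    refine Finset.sum_eq_zero fun i _ => ?_
    by_cases hi : i ∈ X
    · have : (L *ᵥ chiP) i = 0 := by
        show (∑ j, L i j * chiP j) = 0
        refine Finset.sum_eq_zero fun j _ => ?_
        by_cases hj : j ∈ P
        · rw [hL0 i hi j hj, zero_mul]
        · show L i j * chiP j = 0
          rw [hchiP]
          simp [hj]
      rw [this, mul_zero]
    · show chiX i * _ = 0
      rw [hchiX]
      simp [hi]
  have huLv : (inner ℝ u (WithLp.toLp 2 (L *ᵥ (v : Fin n → ℝ))) : ℝ) = 0 := by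
    rw [hinner]
    have : ∑ i, u i * (WithLp.toLp 2 (L *ᵥ (v : Fin n → ℝ))) i = (u : Fin n → ℝ) ⬝ᵥ (L *ᵥ (v : Fin n → ℝ)) := rfl
    rw [this, hLv, hudec, sub_dotProduct, smul_dotProduct, hXLP]
    have h2 : (fun _ => (1:ℝ)) ⬝ᵥ (L *ᵥ chiP) = 0 := by
      rw [hsym, hLone', zero_dotProduct]
    rw [h2, smul_zero, sub_zero]
  -- spectral bound
  have hsplit : d * (inner ℝ u v : ℝ)
      - (inner ℝ u (WithLp.toLp 2 (L *ᵥ (v : Fin n → ℝ))) : ℝ)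
      = ∑ i, (d - μ i) * ((inner ℝ (B i) u : ℝ) * (inner ℝ (B i) v : ℝ)) := by
    rw [hparseval u v, hquad u v, Finset.mul_sum, ← Finset.sum_sub_distrib]
    exact Finset.sum_congr rfl fun i _ => by ring
  have habs : |∑ i, (d - μ i) * ((inner ℝ (B i) u : ℝ) * (inner ℝ (B i) v : ℝ))|
      ≤ θ * ∑ i, |(inner ℝ (B i) u : ℝ)| * |(inner ℝ (B i) v : ℝ)| := by
    refine le_trans (Finset.abs_sum_le_sum_abs _ _) ?_
    rw [Finset.mul_sum]
    refine Finset.sum_le_sum fun i _ => ?_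
    by_cases hg : |d - μ i| ≤ θ
    · rw [abs_mul, abs_mul]
      exact mul_le_mul_of_nonneg_right hg (by positivity)
    · rw [hcoeff i hg u (by rw [real_inner_comm]; exact (real_inner_comm one u ▸ hu0))]
      simp only [zero_mul, mul_zero, abs_zero]
      positivity
  have hcs : (∑ i, |(inner ℝ (B i) u : ℝ)| * |(inner ℝ (B i) v : ℝ)|) ^ 2
      ≤ (inner ℝ u u : ℝ) * (inner ℝ v v : ℝ) := by
    have h := Finset.sum_mul_sq_le_sq_mul_sq Finset.univ
      (fun i => |(inner ℝ (B i) u : ℝ)|) (fun i => |(inner ℝ (B i) v : ℝ)|)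
    simp only [sq_abs] at h
    rw [hparseval u u, hparseval v v]
    refine le_trans h ?_
    apply le_of_eq
    congr 1
    · exact Finset.sum_congr rfl fun i _ => (sq ((inner ℝ (B i) u : ℝ))).symm ▸ by ring
    · exact Finset.sum_congr rfl fun i _ => by ring
  -- combine
  have hmain : (d * (rx * rp) / rn) ^ 2
      ≤ θ ^ 2 * ((rx - rx * rx / rn) * (rp - rp * rp / rn)) := by
    have hSval : d * (inner ℝ u v : ℝ)
        - (inner ℝ u (WithLp.toLp 2 (L *ᵥ (v : Fin n → ℝ))) : ℝ)
        = -(d * (rx * rp) / rn) := by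
      rw [huv, huLv]
      ring
    set t := ∑ i, |(inner ℝ (B i) u : ℝ)| * |(inner ℝ (B i) v : ℝ)| with ht
    have ht0 : 0 ≤ t := Finset.sum_nonneg fun i _ => by positivity
    have h1 : |(-(d * (rx * rp) / rn))| ≤ θ * t := by
      rw [← hSval, hsplit]
      exact habs
    have h2 : (d * (rx * rp) / rn) ^ 2 ≤ (θ * t) ^ 2 := by
      have h1' : |d * (rx * rp) / rn| ≤ θ * t := by rwa [abs_neg] at h1
      calc (d * (rx * rp) / rn) ^ 2 = |d * (rx * rp) / rn| ^ 2 := (sq_abs _).symm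
        _ ≤ (θ * t) ^ 2 := pow_le_pow_left₀ (abs_nonneg _) h1' 2
    have h3 : (θ * t) ^ 2 ≤ θ ^ 2 * ((inner ℝ u u : ℝ) * (inner ℝ v v : ℝ)) := by
      have := mul_le_mul_of_nonneg_left hcs (sq_nonneg θ)
      calc (θ * t) ^ 2 = θ ^ 2 * t ^ 2 := by ring
        _ ≤ θ ^ 2 * ((inner ℝ u u : ℝ) * (inner ℝ v v : ℝ)) := this
    rw [huu, hvv] at h3
    exact le_trans h2 h3
  -- final algebra
  rw [div_le_div_iff₀ (mul_pos hrnpos (by positivity)) (by nlinarith : (0:ℝ) < rx * rp)]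
  have h5 : d ^ 2 * (rx * rp) * (rx * rp) ≤ θ ^ 2 * ((rx * (rN + rp)) * (rp * (rN + rx))) := by
    have hmul := mul_le_mul_of_nonneg_right hmain (le_of_lt (by positivity : (0:ℝ) < rn ^ 2))
    have e1 : (d * (rx * rp) / rn) ^ 2 * rn ^ 2 = d ^ 2 * (rx * rp) * (rx * rp) := by
      field_simp
    have e2 : θ ^ 2 * ((rx - rx * rx / rn) * (rp - rp * rp / rn)) * rn ^ 2
        = θ ^ 2 * ((rx * (rn - rx)) * (rp * (rn - rp))) := by
      field_simp
    rw [e1, e2] at hmul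
    have e3 : rn - rx = rN + rp := by linarith
    have e4 : rn - rp = rN + rx := by linarith
    rw [e3, e4] at hmul
    exact hmul
  have hxp : (0:ℝ) < rx * rp := by nlinarith
  have h6 : ((d ^ 2 - θ ^ 2) * (rx * rp)) * (rx * rp) ≤ (rN * (rn * θ ^ 2)) * (rx * rp) := by
    have hrn_eq : rn = rx + rN + rp := hsum.symm
    rw [hrn_eq]
    nlinarith [h5]
  have h7 : (d ^ 2 - θ ^ 2) * (rx * rp) ≤ rN * (rn * θ ^ 2) :=
    le_of_mul_le_mul_right h6 hxp
  exact h7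
end
end

section
/- Let G be a graph on n vertices with algebraic connectivity σ_1 (second smallest Laplacian eigenvalue). If 0 < σ_1 ≤ 1/2, then the vertex forwarding index satisfies ξ(G) ≥ √((1 − 2σ_1)/σ_1). -/
open Finset

noncomputable section

/-- A routing: a choice of a path between every ordered pair of distinct vertices. -/
def Routing {V : Type*} (G : SimpleGraph V) : Type _ :=
  ∀ u v : V, u ≠ v → G.Path u v

/- The number of paths of the routing `R` having `w` as an internal vertex. -/
open scoped Classical in
def vertexLoad {n : ℕ} {G : SimpleGraph (Fin n)} (R : Routing G) (w : Fin n) : ℕ :=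
  (Finset.univ.filter (fun p : Fin n × Fin n =>
    ∃ h : p.1 ≠ p.2, w ∈ (R p.1 p.2 h).val.support ∧ w ≠ p.1 ∧ w ≠ p.2)).card

/-- The vertex forwarding index `ξ(G) = min_R max_w ξ(G,R,w)`. -/
def vertexForwarding {n : ℕ} (G : SimpleGraph (Fin n)) : ℕ :=
  sInf {m | ∃ R : Routing G, ∀ w : Fin n, vertexLoad R w ≤ m}

/- The number of paths of the routing `R` passing through the edge `e`. -/
open scoped Classical in
def edgeLoad {n : ℕ} {G : SimpleGraph (Fin n)} (R : Routing G) (e : Sym2 (Fin n)) : ℕ :=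
  (Finset.univ.filter (fun p : Fin n × Fin n =>
    ∃ h : p.1 ≠ p.2, e ∈ (R p.1 p.2 h).val.edges)).card

/-- The edge forwarding index `π(G) = min_R max_e π(G,R,e)`. -/
def edgeForwarding {n : ℕ} (G : SimpleGraph (Fin n)) : ℕ :=
  sInf {m | ∃ R : Routing G, ∀ e ∈ G.edgeSet, edgeLoad R e ≤ m}

/-! ### Auxiliary lemmas -/

section Aux

open SimpleGraph Matrix

set_option linter.unusedSectionVars false

lemma aux_tele {V : Type*} {G : SimpleGraph V} (f : V → ℝ) {u v : V} (p : G.Walk u v) :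
    ((p.darts).map fun d => f d.fst - f d.snd).sum = f u - f v := by
  induction p with
  | nil => simp
  | cons h q ih => rw [Walk.darts_cons, List.map_cons, List.sum_cons, ih]; ring

lemma aux_dart_snd_ne_start {V : Type*} {G : SimpleGraph V} {u v : V} {p : G.Walk u v}
    (hnd : p.support.Nodup) {d : G.Dart} (hd : d ∈ p.darts) : d.snd ≠ u := by
  induction p with
  | nil => simp at hd
  | cons h q ih =>
    rw [Walk.support_cons, List.nodup_cons] at hnd
    rw [Walk.darts_cons, List.mem_cons] at hd
    rcases hd with rfl | hd
    · exact fun he => hnd.1 (he ▸ q.start_mem_support)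
    · exact fun he => hnd.1 (he ▸ q.dart_snd_mem_support_of_mem_darts hd)

lemma aux_dart_fst_ne_end {V : Type*} {G : SimpleGraph V} {u v : V} {p : G.Walk u v}
    (hnd : p.support.Nodup) {d : G.Dart} (hd : d ∈ p.darts) : d.fst ≠ v := by
  have h1 : d.symm ∈ p.reverse.darts := by simp [hd]
  have h2 : p.reverse.support.Nodup := by
    rw [Walk.support_reverse]; exact List.nodup_reverse.mpr hnd
  exact aux_dart_snd_ne_start h2 h1

variable {n : ℕ} {G : SimpleGraph (Fin n)} [DecidableRel G.Adj]

lemma aux_pair_bound (f : Fin n → ℝ) {u v : Fin n} (p : G.Path u v) :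
    (f u - f v) ^ 2 ≤ ((n : ℝ) - 1) * ∑ D ∈ p.val.darts.toFinset, (f D.fst - f D.snd) ^ 2 := by
  classical
  have hnd : p.val.darts.Nodup := Walk.darts_nodup_of_support_nodup p.2.support_nodup
  have htel : ∑ D ∈ p.val.darts.toFinset, (f D.fst - f D.snd) = f u - f v := by
    rw [List.sum_toFinset _ hnd, aux_tele]
  have hlen : p.val.length < n := by
    have := p.2.length_lt; rwa [Fintype.card_fin] at this
  have hcard : (p.val.darts.toFinset.card : ℝ) ≤ (n : ℝ) - 1 := by
    rw [List.toFinset_card_of_nodup hnd, Walk.length_darts]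
    have h2 : (p.val.length : ℝ) + 1 ≤ (n : ℝ) := by exact_mod_cast hlen
    linarith
  have hsq : (f u - f v) ^ 2 ≤ (p.val.darts.toFinset.card : ℝ) *
      ∑ D ∈ p.val.darts.toFinset, (f D.fst - f D.snd) ^ 2 := by
    rw [← htel]; exact sq_sum_le_card_mul_sum_sq
  have hpos : (0:ℝ) ≤ ∑ D ∈ p.val.darts.toFinset, (f D.fst - f D.snd) ^ 2 :=
    Finset.sum_nonneg fun _ _ => sq_nonneg _
  exact hsq.trans (mul_le_mul_of_nonneg_right hcard hpos)

open scoped Classical in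
lemma aux_count_le (R : Routing G) (x : ℕ) (hx : ∀ w, vertexLoad R w ≤ x) (D : G.Dart) :
    (Finset.univ.filter (fun p : Fin n × Fin n =>
      ∃ h : p.1 ≠ p.2, D ∈ (R p.1 p.2 h).val.darts)).card ≤ 2 * x + 1 := by
  set Sa := Finset.univ.filter (fun p : Fin n × Fin n =>
    ∃ h : p.1 ≠ p.2, D.fst ∈ (R p.1 p.2 h).val.support ∧ D.fst ≠ p.1 ∧ D.fst ≠ p.2) with hSa
  set Sb := Finset.univ.filter (fun p : Fin n × Fin n =>
    ∃ h : p.1 ≠ p.2, D.snd ∈ (R p.1 p.2 h).val.support ∧ D.snd ≠ p.1 ∧ D.snd ≠ p.2) with hSb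
  have hsub : Finset.univ.filter (fun p : Fin n × Fin n =>
      ∃ h : p.1 ≠ p.2, D ∈ (R p.1 p.2 h).val.darts) ⊆ (Sb ∪ Sa) ∪ {(D.fst, D.snd)} := by
    intro p hp
    obtain ⟨h, hD⟩ := (Finset.mem_filter.mp hp).2
    have hpath := (R p.1 p.2 h).2
    have hfst : D.fst ∈ (R p.1 p.2 h).val.support :=
      Walk.dart_fst_mem_support_of_mem_darts _ hD
    have hsnd : D.snd ∈ (R p.1 p.2 h).val.support :=
      Walk.dart_snd_mem_support_of_mem_darts _ hD
    have hsnd1 : D.snd ≠ p.1 := aux_dart_snd_ne_start hpath.support_nodup hD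
    have hfst2 : D.fst ≠ p.2 := aux_dart_fst_ne_end hpath.support_nodup hD
    by_cases hb : D.snd = p.2
    · by_cases ha : D.fst = p.1
      · apply Finset.mem_union_right
        simp [Prod.ext_iff, ha.symm, hb.symm]
      · refine Finset.mem_union_left _ (Finset.mem_union_right _ ?_)
        rw [hSa, Finset.mem_filter]
        exact ⟨Finset.mem_univ _, h, hfst, ha, hfst2⟩
    · refine Finset.mem_union_left _ (Finset.mem_union_left _ ?_)
      rw [hSb, Finset.mem_filter]
      exact ⟨Finset.mem_univ _, h, hsnd, hsnd1, hb⟩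
  calc _ ≤ ((Sb ∪ Sa) ∪ {(D.fst, D.snd)}).card := Finset.card_le_card hsub
  _ ≤ (Sb ∪ Sa).card + ({(D.fst, D.snd)} : Finset (Fin n × Fin n)).card := Finset.card_union_le _ _
  _ ≤ (Sb.card + Sa.card) + 1 := by
      have := Finset.card_union_le Sb Sa
      simp only [Finset.card_singleton]; omega
  _ ≤ (x + x) + 1 := by
      have ha : Sa.card ≤ x := le_trans (le_of_eq (by rw [hSa]; rfl)) (hx D.fst)
      have hb : Sb.card ≤ x := le_trans (le_of_eq (by rw [hSb]; rfl)) (hx D.snd)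
      omega
  _ = 2 * x + 1 := by ring

lemma aux_dart_sum_eq (f : Fin n → ℝ) :
    ∑ D : G.Dart, (f D.fst - f D.snd)^2
      = ∑ i, ∑ j, if G.Adj i j then (f i - f j)^2 else 0 := by
  classical
  have hpair : (∑ i, ∑ j, if G.Adj i j then (f i - f j)^2 else 0)
      = ∑ p : Fin n × Fin n, (if G.Adj p.1 p.2 then (f p.1 - f p.2)^2 else 0) :=
    (Fintype.sum_prod_type (f := fun p : Fin n × Fin n =>
      if G.Adj p.1 p.2 then (f p.1 - f p.2)^2 else 0)).symm
  rw [hpair]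
  have : ∑ p : Fin n × Fin n, (if G.Adj p.1 p.2 then (f p.1 - f p.2)^2 else 0)
      = ∑ p ∈ Finset.univ.filter (fun p : Fin n × Fin n => G.Adj p.1 p.2), (f p.1 - f p.2)^2 :=
    (Finset.sum_filter _ _).symm
  rw [this]
  refine Finset.sum_bij' (fun D _ => (D.fst, D.snd))
    (fun p hp => ⟨(p.1, p.2), (Finset.mem_filter.mp hp).2⟩) ?_ ?_ ?_ ?_ ?_
  · intro D _; simp [D.adj]
  · intro p hp; exact Finset.mem_univ _
  · intro D _; rfl
  · intro p hp; rfl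
  · intro D _; rfl

lemma aux_sum_pairs_eq (f : Fin n → ℝ) (hf : ∑ v, f v = 0) :
    (∑ i, ∑ j, (f i - f j)^2) = 2 * n * ∑ v, f v^2 := by
  have h1 : ∀ i : Fin n, ∑ j, (f i - f j)^2
      = n * f i^2 - 2 * f i * (∑ v, f v) + ∑ v, f v^2 := by
    intro i
    rw [Finset.sum_congr rfl (fun j _ => (by ring : (f i - f j)^2 = f i^2 - 2*(f i*f j) + f j^2))]
    rw [Finset.sum_add_distrib, Finset.sum_sub_distrib, Finset.sum_const, Finset.card_univ,
      Fintype.card_fin, ← Finset.mul_sum]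
    rw [← Finset.mul_sum]
    ring
  simp_rw [h1, hf, mul_zero, sub_zero]
  rw [Finset.sum_add_distrib, Finset.sum_const, Finset.card_univ, Fintype.card_fin,
    ← Finset.mul_sum]
  ring

open scoped Classical in
lemma aux_key_ineq (R : Routing G) (x : ℕ) (hx : ∀ w, vertexLoad R w ≤ x)
    (f : Fin n → ℝ) (hf : ∑ v, f v = 0) :
    2 * n * (∑ v, f v ^ 2) ≤ ((n : ℝ) - 1) * (2 * x + 1) *
      (∑ i, ∑ j, if G.Adj i j then (f i - f j)^2 else 0) := by
  rcases Nat.eq_zero_or_pos n with rfl | hn0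
  · simp
  have hn1 : (0:ℝ) ≤ (n:ℝ) - 1 := by
    have : (1:ℝ) ≤ (n:ℝ) := by exact_mod_cast hn0
    linarith
  set c : (Fin n × Fin n) → G.Dart → Prop :=
    fun p D => ∃ h : p.1 ≠ p.2, D ∈ (R p.1 p.2 h).val.darts with hc
  have hstep : ∀ p : Fin n × Fin n, (f p.1 - f p.2)^2
      ≤ ((n:ℝ)-1) * ∑ D : G.Dart, (if c p D then (f D.fst - f D.snd)^2 else 0) := by
    intro p
    by_cases h : p.1 = p.2
    · have : ∀ D : G.Dart, ¬ c p D := by rintro D ⟨h', _⟩; exact h' h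
      simp only [hc] at this ⊢
      rw [h]
      simp [this]
    · have hb := aux_pair_bound f (R p.1 p.2 h)
      refine hb.trans (le_of_eq ?_)
      congr 1
      rw [← Finset.sum_filter]
      apply Finset.sum_congr
      · ext D
        simp only [Finset.mem_filter, Finset.mem_univ, true_and, List.mem_toFinset, hc]
        exact ⟨fun hD => ⟨h, hD⟩, fun ⟨h', hD⟩ => hD⟩
      · intros; rfl
  have hswap : ∑ p : Fin n × Fin n, ∑ D : G.Dart, (if c p D then (f D.fst - f D.snd)^2 else 0)
      = ∑ D : G.Dart, ((Finset.univ.filter (fun p : Fin n × Fin n => c p D)).card : ℝ)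
          * (f D.fst - f D.snd)^2 := by
    rw [Finset.sum_comm]
    apply Finset.sum_congr rfl
    intro D _
    rw [← Finset.sum_filter, Finset.sum_const, nsmul_eq_mul]
  have hcount : ∀ D : G.Dart,
      ((Finset.univ.filter (fun p : Fin n × Fin n => c p D)).card : ℝ) ≤ 2 * x + 1 := by
    intro D
    have := aux_count_le R x hx D
    calc ((Finset.univ.filter (fun p : Fin n × Fin n => c p D)).card : ℝ)
        ≤ ((2 * x + 1 : ℕ) : ℝ) := by exact_mod_cast this
    _ = 2 * (x:ℝ) + 1 := by push_cast; ring
  calc 2 * (n:ℝ) * (∑ v, f v ^ 2) = ∑ i, ∑ j, (f i - f j)^2 := (aux_sum_pairs_eq f hf).symm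
  _ = ∑ p : Fin n × Fin n, (f p.1 - f p.2)^2 :=
      (Fintype.sum_prod_type (f := fun p : Fin n × Fin n => (f p.1 - f p.2)^2)).symm
  _ ≤ ∑ p : Fin n × Fin n, ((n:ℝ)-1) * ∑ D : G.Dart, (if c p D then (f D.fst - f D.snd)^2 else 0) :=
      Finset.sum_le_sum fun p _ => hstep p
  _ = ((n:ℝ)-1) * ∑ p : Fin n × Fin n, ∑ D : G.Dart, (if c p D then (f D.fst - f D.snd)^2 else 0) :=
      (Finset.mul_sum _ _ _).symm
  _ = ((n:ℝ)-1) * ∑ D : G.Dart, ((Finset.univ.filter (fun p : Fin n × Fin n => c p D)).card : ℝ)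
          * (f D.fst - f D.snd)^2 := by rw [hswap]
  _ ≤ ((n:ℝ)-1) * ∑ D : G.Dart, (2 * (x:ℝ) + 1) * (f D.fst - f D.snd)^2 := by
      apply mul_le_mul_of_nonneg_left _ hn1
      apply Finset.sum_le_sum
      intro D _
      exact mul_le_mul_of_nonneg_right (hcount D) (sq_nonneg _)
  _ = ((n:ℝ)-1) * ((2 * (x:ℝ) + 1) * ∑ D : G.Dart, (f D.fst - f D.snd)^2) := by
      rw [← Finset.mul_sum]
  _ = ((n : ℝ) - 1) * (2 * x + 1) * (∑ i, ∑ j, if G.Adj i j then (f i - f j)^2 else 0) := by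
      rw [aux_dart_sum_eq]; ring

variable (G) in
lemma aux_exists_test (hn : 1 < n) :
    ∃ f : Fin n → ℝ, (∑ v, f v = 0) ∧ (0 < ∑ v, f v ^ 2) ∧
      (f ⬝ᵥ (G.lapMatrix ℝ *ᵥ f) ≤ lapEig G ⟨1, hn⟩ * ∑ v, f v ^ 2) := by
  classical
  set hL : (G.lapMatrix ℝ).IsHermitian := (SimpleGraph.posSemidef_lapMatrix ℝ G).1 with hLdef
  set σ := Tuple.sort hL.eigenvalues with hσ
  have heig : lapEig G ⟨1, hn⟩ = hL.eigenvalues (σ ⟨1, hn⟩) := rfl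
  have hn0 : (0:ℕ) < n := lt_trans Nat.zero_lt_one hn
  set i0 : Fin n := ⟨0, hn0⟩ with hi0
  set i1 : Fin n := ⟨1, hn⟩ with hi1
  set lam0 := hL.eigenvalues (σ i0) with hlam0
  set lam1 := hL.eigenvalues (σ i1) with hlam1
  have hmono : lam0 ≤ lam1 :=
    Tuple.monotone_sort hL.eigenvalues (by simp [hi0, hi1, Fin.le_def] : i0 ≤ i1)
  set u : Fin n → ℝ := ⇑(hL.eigenvectorBasis (σ i0)) with hu
  set w : Fin n → ℝ := ⇑(hL.eigenvectorBasis (σ i1)) with hw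
  have hne : σ i0 ≠ σ i1 := by
    intro h
    have := σ.injective h
    simp [hi0, hi1, Fin.ext_iff] at this
  have hON := orthonormal_iff_ite.mp hL.eigenvectorBasis.orthonormal
  have hdot : ∀ a b : Fin n, (inner ℝ (hL.eigenvectorBasis a) (hL.eigenvectorBasis b) : ℝ)
      = ∑ i, hL.eigenvectorBasis a i * hL.eigenvectorBasis b i := by
    intro a b
    rw [PiLp.inner_apply]
    simp [RCLike.inner_apply, conj_trivial, mul_comm]
  have huu : ∑ i, u i * u i = 1 := by
    have := hON (σ i0) (σ i0); rw [hdot] at this; simpa using this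
  have hww : ∑ i, w i * w i = 1 := by
    have := hON (σ i1) (σ i1); rw [hdot] at this; simpa using this
  have huw : ∑ i, u i * w i = 0 := by
    have := hON (σ i0) (σ i1); rw [hdot] at this; simpa [hne] using this
  have hmu : G.lapMatrix ℝ *ᵥ u = lam0 • u := hL.mulVec_eigenvectorBasis (σ i0)
  have hmw : G.lapMatrix ℝ *ᵥ w = lam1 • w := hL.mulVec_eigenvectorBasis (σ i1)
  by_cases hz : (∑ i, u i = 0)
  · refine ⟨u, hz, ?_, ?_⟩
    · simp_rw [pow_two]; rw [huu]; norm_num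
    · simp_rw [pow_two]; rw [huu, hmu, dotProduct_smul]
      rw [heig]
      simp only [smul_eq_mul]
      rw [show u ⬝ᵥ u = ∑ i, u i * u i from rfl, huu]
      simpa using hmono
  · set a : ℝ := ∑ i, w i with ha
    set b : ℝ := -(∑ i, u i) with hb
    have hb0 : b ≠ 0 := by simp [hb, hz]
    have hsumsq : ∑ v, (a * u v + b * w v)^2 = a^2 + b^2 := by
      have expand : ∀ i, (a * u i + b * w i)^2
          = a^2*(u i*u i) + 2*a*b*(u i*w i) + b^2*(w i*w i) := by intro i; ring
      rw [Finset.sum_congr rfl (fun i _ => expand i), Finset.sum_add_distrib,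
        Finset.sum_add_distrib, ← Finset.mul_sum, ← Finset.mul_sum, ← Finset.mul_sum,
        huu, huw, hww]
      ring
    refine ⟨fun i => a * u i + b * w i, ?_, ?_, ?_⟩
    · rw [Finset.sum_add_distrib, ← Finset.mul_sum, ← Finset.mul_sum, ← ha, hb]
      ring
    · rw [hsumsq]
      have hb2 : 0 < b^2 := by positivity
      nlinarith [sq_nonneg a]
    · have hfeq : (fun i => a * u i + b * w i) = a • u + b • w := by
        funext i; simp [smul_eq_mul]
      have hQ : (fun i => a * u i + b * w i) ⬝ᵥ
          (G.lapMatrix ℝ *ᵥ fun i => a * u i + b * w i) = a^2*lam0 + b^2*lam1 := by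
        rw [hfeq, Matrix.mulVec_add, Matrix.mulVec_smul, Matrix.mulVec_smul, hmu, hmw]
        simp only [dotProduct_add, add_dotProduct, dotProduct_smul, smul_dotProduct,
          smul_eq_mul]
        rw [show u ⬝ᵥ u = ∑ i, u i * u i from rfl, show w ⬝ᵥ w = ∑ i, w i * w i from rfl,
          show u ⬝ᵥ w = ∑ i, u i * w i from rfl,
          show w ⬝ᵥ u = ∑ i, w i * u i from rfl,
          show (∑ i, w i * u i) = ∑ i, u i * w i from
            Finset.sum_congr rfl fun i _ => mul_comm _ _,
          huu, huw, hww]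
        ring
      rw [hQ, hsumsq, heig]
      nlinarith [sq_nonneg a, sq_nonneg b]

variable (G) in
lemma aux_preconn (hn : 1 < n) (h0 : 0 < lapEig G ⟨1, hn⟩) : G.Preconnected := by
  classical
  by_contra hc
  rw [SimpleGraph.Preconnected] at hc
  push_neg at hc
  obtain ⟨u, v, huv⟩ := hc
  have hcomp : 2 ≤ Fintype.card G.ConnectedComponent := by
    refine Fintype.one_lt_card_iff.mpr
      ⟨G.connectedComponentMk u, G.connectedComponentMk v, fun h => huv ?_⟩
    exact (SimpleGraph.ConnectedComponent.eq).mp h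
  rw [SimpleGraph.card_connectedComponent_eq_finrank_ker_toLin'_lapMatrix] at hcomp
  have hker : Matrix.toLin' (G.lapMatrix ℝ) = (G.lapMatrix ℝ).mulVecLin :=
    Matrix.toLin'_apply' _
  rw [hker] at hcomp
  have hrn := LinearMap.finrank_range_add_finrank_ker ((G.lapMatrix ℝ).mulVecLin)
  rw [Module.finrank_pi, Fintype.card_fin] at hrn
  have hrank : (G.lapMatrix ℝ).rank
      = Module.finrank ℝ (LinearMap.range (G.lapMatrix ℝ).mulVecLin) := rfl
  set hL : (G.lapMatrix ℝ).IsHermitian := (SimpleGraph.posSemidef_lapMatrix ℝ G).1 with hLdef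
  have hcard : Fintype.card {i // hL.eigenvalues i ≠ 0} ≤ n - 2 := by
    rw [← hL.rank_eq_card_non_zero_eigs, hrank]
    omega
  have hzeq : Fintype.card {i // hL.eigenvalues i = 0}
      = Fintype.card {i // ¬ hL.eigenvalues i ≠ 0} :=
    Fintype.card_congr (Equiv.subtypeEquivRight (fun i => by simp [not_not]))
  have hzero : 2 ≤ Fintype.card {i // hL.eigenvalues i = 0} := by
    rw [hzeq, Fintype.card_subtype_compl, Fintype.card_fin]
    omega
  obtain ⟨⟨i, hi⟩, ⟨j, hj⟩, hij⟩ := Fintype.one_lt_card_iff.mp (lt_of_lt_of_le one_lt_two hzero)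
  have hij' : i ≠ j := fun h => hij (Subtype.ext h)
  set σ := Tuple.sort hL.eigenvalues with hσ
  have hpq : σ.symm i ≠ σ.symm j := fun h => hij' (by simpa using congrArg σ h)
  have hex : ∃ r : Fin n, (⟨1, hn⟩ : Fin n) ≤ r ∧ hL.eigenvalues (σ r) = 0 := by
    by_cases hp : σ.symm i = ⟨0, lt_trans Nat.zero_lt_one hn⟩
    · refine ⟨σ.symm j, ?_, by simp [hj]⟩
      have : σ.symm j ≠ ⟨0, lt_trans Nat.zero_lt_one hn⟩ := fun h => hpq (hp.trans h.symm)
      have hv : (σ.symm j).val ≠ 0 := fun h => this (Fin.ext h)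
      rw [Fin.le_def]
      exact Nat.one_le_iff_ne_zero.mpr hv
    · refine ⟨σ.symm i, ?_, by simp [hi]⟩
      have hv : (σ.symm i).val ≠ 0 := fun h => hp (Fin.ext h)
      rw [Fin.le_def]
      exact Nat.one_le_iff_ne_zero.mpr hv
  obtain ⟨r, hr1, hr0⟩ := hex
  have hmono : lapEig G ⟨1, hn⟩ ≤ hL.eigenvalues (σ r) :=
    Tuple.monotone_sort hL.eigenvalues hr1
  rw [hr0] at hmono
  linarith

end Aux

theorem vertex_forwarding_lower_bound {n : ℕ} (hn : 1 < n) (G : SimpleGraph (Fin n))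
    [DecidableRel G.Adj]
    (h0 : 0 < lapEig G ⟨1, hn⟩) (h1 : lapEig G ⟨1, hn⟩ ≤ 1 / 2) :
    Real.sqrt ((1 - 2 * lapEig G ⟨1, hn⟩) / lapEig G ⟨1, hn⟩)
      ≤ (vertexForwarding G : ℝ) := by
  classical
  have hpre : G.Preconnected := aux_preconn G hn h0
  set lam := lapEig G ⟨1, hn⟩ with hlam
  set ξ := vertexForwarding G with hξ
  have hmem : ξ ∈ {m | ∃ R : Routing G, ∀ w : Fin n, vertexLoad R w ≤ m} := by
    rw [hξ, vertexForwarding]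
    apply Nat.sInf_mem
    refine ⟨n*n, fun u v h => ((hpre u v).some.toPath), fun w => ?_⟩
    refine le_trans (Finset.card_filter_le _ _) (le_of_eq ?_)
    simp [Finset.card_univ]
  obtain ⟨R, hR⟩ := hmem
  obtain ⟨f, hf0, hfpos, hfQ⟩ := aux_exists_test G hn
  have hkey := aux_key_ineq R ξ hR f hf0
  have hform : (∑ i, ∑ j, if G.Adj i j then (f i - f j)^2 else 0)
      = 2 * (dotProduct f ((SimpleGraph.lapMatrix ℝ G).mulVec f)) := by
    have h := SimpleGraph.lapMatrix_toLinearMap₂' ℝ G f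
    rw [Matrix.toLinearMap₂'_apply'] at h
    rw [h]; ring
  rw [hform] at hkey
  set S := ∑ v, f v ^ 2 with hS
  have hn2 : (2:ℝ) ≤ (n:ℝ) := by exact_mod_cast hn
  have hxnn : (0:ℝ) ≤ 2 * (ξ:ℝ) + 1 := by positivity
  have hchain : 2 * (n:ℝ) * S ≤ ((n:ℝ)-1) * (2*(ξ:ℝ)+1) * (2 * (lam * S)) := by
    calc 2 * (n:ℝ) * S ≤ ((n:ℝ)-1) * (2*(ξ:ℝ)+1) * (2 * (dotProduct f ((SimpleGraph.lapMatrix ℝ G).mulVec f))) := hkey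
    _ ≤ ((n:ℝ)-1) * (2*(ξ:ℝ)+1) * (2 * (lam * S)) := by
        apply mul_le_mul_of_nonneg_left _ (by nlinarith : (0:ℝ) ≤ ((n:ℝ)-1) * (2*(ξ:ℝ)+1))
        linarith [hfQ]
  have h6 : (n:ℝ) ≤ ((n:ℝ)-1) * (2*(ξ:ℝ)+1) * lam := by
    nlinarith [hfpos, hchain]
  have h7 : 1 ≤ (2*(ξ:ℝ)+1) * lam := by
    nlinarith [h6, h0, hn2, mul_nonneg hxnn h0.le]
  have harg : (1 - 2 * lam) / lam ≤ (ξ:ℝ)^2 := by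
    rw [div_le_iff₀ h0]
    nlinarith [h7, mul_nonneg (sq_nonneg ((ξ:ℝ) - 1)) h0.le]
  calc Real.sqrt ((1 - 2 * lam) / lam) ≤ Real.sqrt ((ξ:ℝ)^2) := Real.sqrt_le_sqrt harg
  _ = (ξ:ℝ) := Real.sqrt_sq (Nat.cast_nonneg _)
end
end

section
/- Let G be a simple graph on n vertices with average degree d = vol(G)/n. Suppose |d − σ_i| ≤ θ for all nonzero Laplacian eigenvalues σ_i. Then for any two subsets X, Y ⊆ V(G): |e(X,Y) − (d/n)|X||Y| + d|X∩Y| − vol(X∩Y)| ≤ (θ/n)·√(|X|(n−|X|)|Y|(n−|Y|)). -/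
open Finset

open Matrix

noncomputable section

/-- `e(X, Y)`: the number of ordered pairs `(x, y)` with `x ∈ X`, `y ∈ Y` adjacent. -/
def eOrd {n : ℕ} (G : SimpleGraph (Fin n)) [DecidableRel G.Adj]
    (X Y : Finset (Fin n)) : ℕ :=
  ((X ×ˢ Y).filter fun p => G.Adj p.1 p.2).card

lemma ind_dot {n : ℕ} (S T : Finset (Fin n)) :
    (fun v => if v ∈ S then (1:ℝ) else 0) ⬝ᵥ (fun v => if v ∈ T then (1:ℝ) else 0)
      = ((S ∩ T).card : ℝ) := by
  simp only [dotProduct, ite_mul, one_mul, zero_mul, Finset.sum_ite_mem,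
    Finset.univ_inter, Finset.sum_ite_mem, Finset.sum_const, nsmul_eq_mul, mul_one]

lemma ones_dot {n : ℕ} (S : Finset (Fin n)) :
    (fun _ => (1:ℝ)) ⬝ᵥ (fun v => if v ∈ S then (1:ℝ) else 0) = (S.card : ℝ) := by
  simp only [dotProduct, one_mul, Finset.sum_ite_mem, Finset.univ_inter,
    Finset.sum_const, nsmul_eq_mul, mul_one]

lemma ind_dot_mulVec {n : ℕ} (M : Matrix (Fin n) (Fin n) ℝ) (S T : Finset (Fin n)) :
    (fun v => if v ∈ S then (1:ℝ) else 0) ⬝ᵥ (M *ᵥ (fun v => if v ∈ T then (1:ℝ) else 0))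
      = ∑ v ∈ S, ∑ w ∈ T, M v w := by
  simp only [dotProduct, Matrix.mulVec, ite_mul, one_mul, zero_mul,
    mul_ite, mul_one, mul_zero, Finset.sum_ite_mem, Finset.univ_inter]


lemma dot_self_nonneg {n : ℕ} (v : Fin n → ℝ) : (0:ℝ) ≤ v ⬝ᵥ v :=
  Finset.sum_nonneg fun i _ => mul_self_nonneg _

lemma abs_cauchy_schwarz {n : ℕ} (v w : Fin n → ℝ) :
    ∑ i, |v i| * |w i| ≤ Real.sqrt (v ⬝ᵥ v) * Real.sqrt (w ⬝ᵥ w) := by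
  have hsq : ∀ z : ℝ, |z|^2 = z * z := fun z => by rw [sq_abs]; ring
  have h := Finset.sum_mul_sq_le_sq_mul_sq Finset.univ (fun i => |v i|) (fun i => |w i|)
  simp only [hsq] at h
  calc ∑ i, |v i| * |w i|
      = Real.sqrt ((∑ i, |v i| * |w i|)^2) := (Real.sqrt_sq (by positivity)).symm
    _ ≤ Real.sqrt ((v ⬝ᵥ v) * (w ⬝ᵥ w)) := Real.sqrt_le_sqrt (by
        simpa only [dotProduct] using h)
    _ = Real.sqrt (v ⬝ᵥ v) * Real.sqrt (w ⬝ᵥ w) := Real.sqrt_mul (dot_self_nonneg v) _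

set_option maxHeartbeats 2000000 in
theorem discrepancy_inequality {n : ℕ} (G : SimpleGraph (Fin n)) [DecidableRel G.Adj]
    (θ : ℝ)
    (hθ : ∀ i : Fin n, 0 < (i : ℕ) → |avgDeg G - lapEig G i| ≤ θ)
    (X Y : Finset (Fin n)) :
    |(eOrd G X Y : ℝ) - avgDeg G / n * X.card * Y.card
        + avgDeg G * (X ∩ Y).card - ∑ v ∈ X ∩ Y, (G.degree v : ℝ)|
      ≤ θ / n * Real.sqrt (X.card * (n - X.card) * Y.card * (n - Y.card)) := by
  have hXn : X.card ≤ n := le_trans (Finset.card_le_univ X) (by simp)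
  have hYn : Y.card ≤ n := le_trans (Finset.card_le_univ Y) (by simp)
  by_cases hn : n ≤ 1
  · -- degenerate case
    have hdeg : ∀ v : Fin n, G.degree v = 0 := by
      intro v
      rw [← SimpleGraph.card_neighborFinset_eq_degree, Finset.card_eq_zero,
        Finset.eq_empty_iff_forall_notMem]
      intro w hw
      rw [SimpleGraph.mem_neighborFinset] at hw
      have h1 := v.isLt; have h2 := w.isLt
      have : v = w := Fin.ext (by omega)
      exact G.loopless.irrefl v (this ▸ hw)
    have havg : avgDeg G = 0 := by simp [avgDeg, hdeg]
    have heo : eOrd G X Y = 0 := by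
      rw [eOrd, Finset.card_eq_zero, Finset.filter_eq_empty_iff]
      intro p _
      have h1 := p.1.isLt; have h2 := p.2.isLt
      have : p.1 = p.2 := Fin.ext (by omega)
      rw [this]
      exact G.loopless.irrefl p.2
    have hXa : (X.card : ℝ) * ((n:ℝ) - X.card) = 0 := by
      have : X.card = 0 ∨ X.card = n := by omega
      rcases this with h | h <;> simp [h]
    rw [havg, heo, hXa, zero_mul]
    simp [hdeg]
  push_neg at hn
  haveI : NeZero n := ⟨by omega⟩
  have hnR : (0:ℝ) < n := by positivity
  set d := avgDeg G with hddef
  set A := G.lapMatrix ℝ with hAdef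
  have hA : A.IsHermitian := (SimpleGraph.posSemidef_lapMatrix ℝ G).1
  set μ := hA.eigenvalues with hμdef
  set U : Matrix (Fin n) (Fin n) ℝ := (hA.eigenvectorUnitary : Matrix (Fin n) (Fin n) ℝ) with hUdef
  have hU1 : star U * U = 1 := Unitary.coe_star_mul_self _
  have hU2 : U * star U = 1 := Unitary.coe_mul_star_self _
  have hstarU : star U = Uᵀ := by
    rw [Matrix.star_eq_conjTranspose, Matrix.conjTranspose_eq_transpose_of_trivial]
  rw [hstarU] at hU1 hU2
  have hspec : A = U * Matrix.diagonal μ * Uᵀ := by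
    have := hA.spectral_theorem
    rw [Unitary.conjStarAlgAut_apply, ← hUdef, hstarU] at this
    exact this
  have hAT : Aᵀ = A := by
    rw [← Matrix.conjTranspose_eq_transpose_of_trivial, hA.eq]
  set π := Tuple.sort μ with hπdef
  have hlap : lapEig G = μ ∘ π := rfl
  -- vectors
  set u : Fin n → ℝ := fun _ => 1 with hudef
  set xI : Fin n → ℝ := fun v => if v ∈ X then 1 else 0 with hxIdef
  set yI : Fin n → ℝ := fun v => if v ∈ Y then 1 else 0 with hyIdef
  have hux : u ⬝ᵥ xI = X.card := ones_dot X
  have huy : u ⬝ᵥ yI = Y.card := ones_dot Y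
  have hxu : xI ⬝ᵥ u = X.card := by rw [dotProduct_comm]; exact hux
  have hyu : yI ⬝ᵥ u = Y.card := by rw [dotProduct_comm]; exact huy
  have hxy : xI ⬝ᵥ yI = ((X ∩ Y).card : ℝ) := ind_dot X Y
  have hxx0 : xI ⬝ᵥ xI = (X.card : ℝ) := by rw [ind_dot X X, Finset.inter_self]
  have hyy0 : yI ⬝ᵥ yI = (Y.card : ℝ) := by rw [ind_dot Y Y, Finset.inter_self]
  have huu : u ⬝ᵥ u = n := by
    simp [hudef, dotProduct]
  have hLu : A *ᵥ u = 0 := G.lapMatrix_mulVec_const_eq_zero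
  have hE : (eOrd G X Y : ℝ) = (∑ v ∈ X ∩ Y, (G.degree v : ℝ)) - xI ⬝ᵥ (A *ᵥ yI) := by
    have hdeg : xI ⬝ᵥ ((G.degMatrix ℝ) *ᵥ yI) = ∑ v ∈ X ∩ Y, (G.degree v : ℝ) := by
      rw [ind_dot_mulVec]
      simp only [SimpleGraph.degMatrix, Matrix.diagonal_apply, Finset.sum_ite_eq,
        Finset.sum_ite_mem]
    have hadj : xI ⬝ᵥ ((G.adjMatrix ℝ) *ᵥ yI) = (eOrd G X Y : ℝ) := by
      rw [ind_dot_mulVec, eOrd]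
      rw [Finset.card_filter, Nat.cast_sum, Finset.sum_product]
      push_cast
      simp [SimpleGraph.adjMatrix_apply]
    rw [hAdef, SimpleGraph.lapMatrix, Matrix.sub_mulVec, dotProduct_sub, hdeg, hadj]
    ring
  set x' : Fin n → ℝ := xI - ((X.card : ℝ)/n) • u with hx'def
  set y' : Fin n → ℝ := yI - ((Y.card : ℝ)/n) • u with hy'def
  have hux' : u ⬝ᵥ x' = 0 := by
    rw [hx'def, dotProduct_sub, dotProduct_smul, hux, huu, smul_eq_mul]
    field_simp
    ring
  have hdot' : ∀ (v w : Fin n → ℝ) (s t : ℝ),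
      (v - (s/n) • u) ⬝ᵥ (w - (t/n) • u) = v ⬝ᵥ w - (t/n) * (v ⬝ᵥ u) - (s/n) * (u ⬝ᵥ w)
        + (s/n) * (t/n) * n := by
    intro v w s t
    rw [dotProduct_sub, sub_dotProduct, sub_dotProduct, dotProduct_smul, dotProduct_smul,
      smul_dotProduct, smul_dotProduct, huu]
    simp only [smul_eq_mul]
    ring
  have hxy' : x' ⬝ᵥ y' = xI ⬝ᵥ yI - (X.card * Y.card : ℝ)/n := by
    rw [hx'def, hy'def, hdot' xI yI _ _, hxu, huy]
    field_simp
    ring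
  have hxx' : x' ⬝ᵥ x' = (X.card : ℝ) * ((n:ℝ) - X.card) / n := by
    rw [hx'def, hdot' xI xI _ _, hxu, hux, hxx0]
    clear hspec
    field_simp
    ring
  have hyy' : y' ⬝ᵥ y' = (Y.card : ℝ) * ((n:ℝ) - Y.card) / n := by
    rw [hy'def, hdot' yI yI _ _, hyu, huy, hyy0]
    clear hspec
    field_simp
    ring
  have hAy' : A *ᵥ y' = A *ᵥ yI := by
    rw [hy'def, Matrix.mulVec_sub, Matrix.mulVec_smul, hLu]
    simp
  have hAxy' : x' ⬝ᵥ (A *ᵥ y') = xI ⬝ᵥ (A *ᵥ yI) := by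
    rw [hAy', hx'def, sub_dotProduct, smul_dotProduct]
    have : u ⬝ᵥ (A *ᵥ yI) = 0 := by
      rw [Matrix.dotProduct_mulVec, ← hAT, ← Matrix.mulVec_transpose, Matrix.transpose_transpose,
        hLu]
      simp
    rw [this]
    simp
  -- target rewrite
  have hT : (eOrd G X Y : ℝ) - d / n * X.card * Y.card
        + d * (X ∩ Y).card - ∑ v ∈ X ∩ Y, (G.degree v : ℝ)
      = d * (x' ⬝ᵥ y') - x' ⬝ᵥ (A *ᵥ y') := by
    rw [hE, hAxy', hxy', hxy]
    field_simp
    ring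
  -- spectral coordinates
  set c : Fin n → ℝ := Uᵀ *ᵥ x' with hcdef
  set c' : Fin n → ℝ := Uᵀ *ᵥ y' with hc'def
  set a : Fin n → ℝ := Uᵀ *ᵥ u with hadef
  have hpres : ∀ v w : Fin n → ℝ, (Uᵀ *ᵥ v) ⬝ᵥ (Uᵀ *ᵥ w) = v ⬝ᵥ w := by
    intro v w
    rw [Matrix.mulVec_transpose, ← Matrix.dotProduct_mulVec, Matrix.mulVec_mulVec, hU2,
      Matrix.one_mulVec]
  have hcc' : x' ⬝ᵥ y' = c ⬝ᵥ c' := (hpres x' y').symm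
  have hspec' : x' ⬝ᵥ (A *ᵥ y') = ∑ i, (μ i * (c i * c' i)) := by
    rw [hspec, ← Matrix.mulVec_mulVec, ← Matrix.mulVec_mulVec, Matrix.dotProduct_mulVec,
      ← Matrix.mulVec_transpose, ← hcdef, ← hc'def]
    simp only [dotProduct, Matrix.mulVec_diagonal]
    exact Finset.sum_congr rfl fun i _ => by ring
  have hDa : ∀ i, μ i * a i = 0 := by
    have h0 : Uᵀ *ᵥ (A *ᵥ u) = 0 := by rw [hLu, Matrix.mulVec_zero]
    rw [hspec, Matrix.mulVec_mulVec] at h0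
    have h1 : Uᵀ * (U * Matrix.diagonal μ * Uᵀ) = Matrix.diagonal μ * Uᵀ := by
      rw [← Matrix.mul_assoc, ← Matrix.mul_assoc, hU1, Matrix.one_mul]
    rw [h1, ← Matrix.mulVec_mulVec, ← hadef] at h0
    intro i
    have h2 := congrFun h0 i
    rwa [Matrix.mulVec_diagonal] at h2
  have hac : a ⬝ᵥ c = 0 := by
    have h : a ⬝ᵥ c = u ⬝ᵥ x' := by rw [hcdef, hadef, hpres]
    rw [h, hux']
  have haa : a ⬝ᵥ a = n := by rw [hadef, hpres, huu]
  -- minimum eigenvalue is zero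
  have hmono : Monotone (μ ∘ π) := Tuple.monotone_sort μ
  have hpos : ∀ i, 0 ≤ μ i := fun i => (SimpleGraph.posSemidef_lapMatrix ℝ G).eigenvalues_nonneg i
  have hmin : μ (π 0) = 0 := by
    have hdet : A.det = 0 := by
      rw [← Matrix.exists_mulVec_eq_zero_iff]
      refine ⟨u, ?_, hLu⟩
      intro h
      have := congrFun h ⟨0, by omega⟩
      simp [hudef] at this
    have hprod : ∏ i, μ i = 0 := by
      have h := hA.det_eq_prod_eigenvalues
      rw [hdet] at h
      exact_mod_cast h.symm
    obtain ⟨i, -, hi0⟩ := Finset.prod_eq_zero_iff.mp hprod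
    have h1 : μ (π 0) ≤ μ i := by
      have h0le : (0 : Fin n) ≤ π.symm i := Fin.zero_le _
      have := hmono h0le
      simpa using this
    exact le_antisymm (hi0 ▸ h1) (hpos _)
  -- key pointwise bound
  have hθ' : ∀ i : Fin n, i ≠ π 0 → |d - μ i| ≤ θ := by
    intro i hi
    have h1 : π.symm i ≠ 0 := fun h => hi (by rw [← h]; simp)
    have h2 : 0 < ((π.symm i : Fin n) : ℕ) := Nat.pos_of_ne_zero (fun h => h1 (Fin.ext h))
    have := hθ (π.symm i) h2
    rwa [hlap, Function.comp_apply, Equiv.apply_symm_apply] at this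
  have hkey : ∀ i, |(d - μ i) * (c i * c' i)| ≤ θ * (|c i| * |c' i|) := by
    intro i
    by_cases h1 : |d - μ i| ≤ θ
    · rw [abs_mul, abs_mul]
      exact mul_le_mul_of_nonneg_right h1 (by positivity)
    · have hi : i = π 0 := by
        by_contra h2
        exact h1 (hθ' i h2)
      have hμi : μ i = 0 := hi ▸ hmin
      have hd : θ < |d| := by
        rw [hμi, sub_zero] at h1; linarith [not_le.mp h1]
      have haj : ∀ j, j ≠ i → a j = 0 := by
        intro j hj
        by_contra h3
        have hμj : μ j = 0 := by
          rcases mul_eq_zero.mp (hDa j) with h | h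
          · exact h
          · exact absurd h h3
        have h4 : |d - μ j| ≤ θ := hθ' j (hi ▸ hj)
        rw [hμj, sub_zero] at h4
        linarith
      have hai : a i * a i = n := by
        rw [← haa, dotProduct, Finset.sum_eq_single i]
        · intro b _ hb; rw [haj b hb]; ring
        · intro h; exact absurd (Finset.mem_univ i) h
      have hane : a i ≠ 0 := by
        intro h
        rw [h, mul_zero] at hai
        exact absurd hai.symm (by positivity)
      have hci : c i = 0 := by
        have h4 : a i * c i = 0 := by
          rw [← hac, dotProduct, Finset.sum_eq_single i]
          · intro b _ hb; rw [haj b hb]; ring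
          · intro h; exact absurd (Finset.mem_univ i) h
        rcases mul_eq_zero.mp h4 with h | h
        · exact absurd h hane
        · exact h
      simp [hci]
  have hθ0 : 0 ≤ θ := le_trans (abs_nonneg _) (hθ' (π 1) (by
    intro h
    exact absurd (π.injective h) (by simp [Fin.ext_iff]; omega)))
  -- Cauchy–Schwarz
  have hcs : ∑ i, |c i| * |c' i| ≤ Real.sqrt (c ⬝ᵥ c) * Real.sqrt (c' ⬝ᵥ c') :=
    abs_cauchy_schwarz c c'
  have hcc : c ⬝ᵥ c = (X.card : ℝ) * ((n:ℝ) - X.card) / n := by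
    rw [hcdef, hpres, hxx']
  have hc'c' : c' ⬝ᵥ c' = (Y.card : ℝ) * ((n:ℝ) - Y.card) / n := by
    rw [hc'def, hpres, hyy']
  have hXnn : (0:ℝ) ≤ (X.card : ℝ) * ((n:ℝ) - X.card) := by
    have : (X.card : ℝ) ≤ n := by exact_mod_cast hXn
    have h0 : (0:ℝ) ≤ (X.card : ℝ) := Nat.cast_nonneg _
    nlinarith
  have hYnn : (0:ℝ) ≤ (Y.card : ℝ) * ((n:ℝ) - Y.card) := by
    have : (Y.card : ℝ) ≤ n := by exact_mod_cast hYn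
    have h0 : (0:ℝ) ≤ (Y.card : ℝ) := Nat.cast_nonneg _
    nlinarith
  calc |(eOrd G X Y : ℝ) - d / n * X.card * Y.card
        + d * (X ∩ Y).card - ∑ v ∈ X ∩ Y, (G.degree v : ℝ)|
      = |∑ i, (d - μ i) * (c i * c' i)| := by
        rw [hT, hcc', hspec', dotProduct, Finset.mul_sum, ← Finset.sum_sub_distrib]
        congr 1
        exact Finset.sum_congr rfl fun i _ => by ring
    _ ≤ ∑ i, |(d - μ i) * (c i * c' i)| := Finset.abs_sum_le_sum_abs _ _
    _ ≤ ∑ i, θ * (|c i| * |c' i|) := Finset.sum_le_sum fun i _ => hkey i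
    _ = θ * ∑ i, |c i| * |c' i| := by rw [Finset.mul_sum]
    _ ≤ θ * (Real.sqrt (c ⬝ᵥ c) * Real.sqrt (c' ⬝ᵥ c')) := mul_le_mul_of_nonneg_left hcs hθ0
    _ = θ / n * Real.sqrt (X.card * (n - X.card) * Y.card * (n - Y.card)) := by
        rw [hcc, hc'c', ← Real.sqrt_mul (div_nonneg hXnn hnR.le)]
        have harg : (X.card : ℝ) * ((n:ℝ) - X.card) / n * ((Y.card : ℝ) * ((n:ℝ) - Y.card) / n)
            = ((X.card : ℝ) * ((n:ℝ) - X.card) * (Y.card : ℝ) * ((n:ℝ) - Y.card)) / ((n:ℝ) * n) := by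
          ring
        have hEnn : (0:ℝ) ≤ (X.card:ℝ) * ((n:ℝ) - X.card) * (Y.card:ℝ) * ((n:ℝ) - Y.card) := by
          nlinarith [mul_nonneg hXnn hYnn]
        rw [harg, Real.sqrt_div hEnn, Real.sqrt_mul_self hnR.le]
        ring
end
end
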